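/- arXiv:2004.11642 — 5 statements merged into one kernel-verified Lean document; each statement's English description precedes it below -/
import Mathlib

section
/- Let n ∈ ℕ, let E be a linear subspace of ℝ^n, let s > 0, and let f : ℝ^n → [-1,1] be a measurable s-smooth function. Then the averaged function A_E f also takes values in [-1,1] and is s-smooth. -/
open MeasureTheory

/-- The standard Gaussian measure `γ_n` on `ℝ^n`: the product of `n` i.i.d. standard
Gaussians `N(0,1)`, transported to `EuclideanSpace ℝ (Fin n)`. -/
noncomputable def stdGaussian (n : ℕ) : Measure (EuclideanSpace ℝ (Fin n)) :=
  (Measure.pi fun _ : Fin n => ProbabilityTheory.gaussianReal 0 1).map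
    (MeasurableEquiv.toLp 2 (Fin n → ℝ))

/-- The orthogonal projection `Π_E` onto a subspace `E`, as a map of the ambient space. -/
noncomputable def proj {n : ℕ} (E : Submodule ℝ (EuclideanSpace ℝ (Fin n)))
    (x : EuclideanSpace ℝ (Fin n)) : EuclideanSpace ℝ (Fin n) :=
  (E.orthogonalProjectionOnto x : EuclideanSpace ℝ (Fin n))

/-- The averaging operator `A_E`: `(A_E f)(x) = ∫ f(Π_E x + Π_{E^⊥} z) dγ_n(z)`. -/
noncomputable def avg {n : ℕ} (E : Submodule ℝ (EuclideanSpace ℝ (Fin n)))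
    (f : EuclideanSpace ℝ (Fin n) → ℝ) (x : EuclideanSpace ℝ (Fin n)) : ℝ :=
  ∫ z, f (proj E x + proj Eᗮ z) ∂(stdGaussian n)

/-- The Ornstein–Uhlenbeck noise operator `P_t`:
`(P_t f)(x) = ∫ f(e^{-t} x + √(1 - e^{-2t}) y) dγ_n(y)`. -/
noncomputable def ouOp {n : ℕ} (t : ℝ) (f : EuclideanSpace ℝ (Fin n) → ℝ)
    (x : EuclideanSpace ℝ (Fin n)) : ℝ :=
  ∫ y, f (Real.exp (-t) • x + Real.sqrt (1 - Real.exp (-2 * t)) • y) ∂(stdGaussian n)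

/-- A function `f : ℝ^n → [-1,1]` is `s`-smooth if `∫ |f - P_t f| dγ_n ≤ s·√t` for all `t > 0`. -/
def SSmooth {n : ℕ} (s : ℝ) (f : EuclideanSpace ℝ (Fin n) → ℝ) : Prop :=
  ∀ t : ℝ, 0 < t → ∫ x, |f x - ouOp t f x| ∂(stdGaussian n) ≤ s * Real.sqrt t

/-- `f` is `c`-Lipschitz (with a real constant `c`). -/
def LipschitzC {E : Type*} [NormedAddCommGroup E] (c : ℝ) (f : E → ℝ) : Prop :=
  ∀ x y, |f x - f y| ≤ c * ‖x - y‖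

/-- `h : ℝ^n → ℝ` is a linear `k`-junta: it depends only on the projection onto a
subspace of dimension at most `k`. -/
def IsLinearJunta {n : ℕ} (k : ℕ) (h : EuclideanSpace ℝ (Fin n) → ℝ) : Prop :=
  ∃ F : Submodule ℝ (EuclideanSpace ℝ (Fin n)), Module.finrank ℝ F ≤ k ∧
    ∀ x z, proj F x = proj F z → h x = h z

/-- Frobenius norm of a matrix. -/
noncomputable def frobNorm {m n : ℕ} (M : Matrix (Fin m) (Fin n) ℝ) : ℝ :=
  Real.sqrt (∑ i, ∑ j, (M i j) ^ 2)

/-- Operator (spectral) norm of a matrix. -/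
noncomputable def specNorm {m n : ℕ} (M : Matrix (Fin m) (Fin n) ℝ) : ℝ :=
  ‖LinearMap.toContinuousLinearMap (Matrix.toEuclideanLin M)‖

/-- The `n×n` matrix of the orthogonal projection onto `E`. -/
noncomputable def projMatrix {n : ℕ} (E : Submodule ℝ (EuclideanSpace ℝ (Fin n))) :
    Matrix (Fin n) (Fin n) ℝ :=
  Matrix.of fun i j => proj E (EuclideanSpace.single j (1 : ℝ)) i

/-- View a vector of `ℝ^n` as a plain function `Fin n → ℝ`. -/
noncomputable def toPi {n : ℕ} (x : EuclideanSpace ℝ (Fin n)) : Fin n → ℝ := fun i => x i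

/-- View a plain function `Fin n → ℝ` as a vector of `ℝ^n`. -/
noncomputable def ofPi {n : ℕ} (v : Fin n → ℝ) : EuclideanSpace ℝ (Fin n) :=
  (EuclideanSpace.equiv (Fin n) ℝ).symm v



section Aux

open ProbabilityTheory ENNReal RealInnerProductSpace

lemma lintegral_fin_pi_prod {n : ℕ} (μ : Fin n → Measure ℝ) [∀ i, SigmaFinite (μ i)]
    (f : Fin n → ℝ → ℝ≥0∞) (hf : ∀ i, Measurable (f i)) :
    ∫⁻ x : Fin n → ℝ, ∏ i, f i (x i) ∂Measure.pi μ = ∏ i, ∫⁻ y, f i y ∂μ i := by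
  induction n with
  | zero => simp
  | succ m ih =>
    have h := (measurePreserving_piFinSuccAbove μ 0).symm
    have hFmeas : Measurable fun x : Fin (m+1) → ℝ => ∏ i, f i (x i) :=
      Finset.measurable_prod _ (fun i _ => (hf i).comp (measurable_pi_apply i))
    rw [← h.lintegral_comp hFmeas]
    simp only [MeasurableEquiv.piFinSuccAbove_symm_apply, Fin.insertNthEquiv,
      Fin.prod_univ_succ, Fin.insertNth_zero, Equiv.coe_fn_mk, Fin.cons_succ,
      Fin.zero_succAbove, Fin.cons_zero, cast_eq]
    rw [lintegral_prod_mul (f := fun y => f 0 y) (g := fun v : Fin m → ℝ => ∏ i, f i.succ (v i))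
      (hf 0).aemeasurable
      (Finset.measurable_prod _ (fun i _ => (hf i.succ).comp (measurable_pi_apply i))).aemeasurable]
    rw [ih (fun i => μ i.succ) (fun i => f i.succ) (fun i => hf i.succ)]

lemma pi_withDensity_fin {n : ℕ} (μ : Fin n → Measure ℝ) [∀ i, SigmaFinite (μ i)]
    (f : Fin n → ℝ → ℝ≥0∞) (hf : ∀ i, Measurable (f i))
    [∀ i, SigmaFinite ((μ i).withDensity (f i))] :
    Measure.pi (fun i => (μ i).withDensity (f i)) =
      (Measure.pi μ).withDensity (fun x => ∏ i, f i (x i)) := by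
  refine Measure.pi_eq (μ := fun i => (μ i).withDensity (f i)) fun s hs => ?_
  have hbox : MeasurableSet (Set.pi Set.univ s) := MeasurableSet.univ_pi hs
  rw [withDensity_apply _ hbox, ← lintegral_indicator hbox]
  have heq : (Set.pi Set.univ s).indicator (fun x => ∏ i, f i (x i)) =
      fun x => ∏ i, (s i).indicator (f i) (x i) := by
    funext x
    by_cases hx : x ∈ Set.pi Set.univ s
    · rw [Set.indicator_of_mem hx]
      exact Finset.prod_congr rfl fun i _ =>
        (Set.indicator_of_mem (hx i (Set.mem_univ i)) _).symm
    · rw [Set.indicator_of_notMem hx]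
      have : ∃ i, x i ∉ s i := by simpa [Set.mem_pi] using hx
      obtain ⟨i, hi⟩ := this
      exact (Finset.prod_eq_zero (Finset.mem_univ i) (Set.indicator_of_notMem hi _)).symm
  rw [heq, lintegral_fin_pi_prod μ _ (fun i => (hf i).indicator (hs i))]
  exact Finset.prod_congr rfl fun i _ => by
    rw [lintegral_indicator (hs i)]
    exact (withDensity_apply _ (hs i)).symm

lemma map_withDensity_equiv {α β : Type*} [MeasurableSpace α] [MeasurableSpace β]
    (e : α ≃ᵐ β) (μ : Measure α) {f : α → ℝ≥0∞} (hf : Measurable f) :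
    (μ.withDensity f).map e = (μ.map e).withDensity (f ∘ e.symm) := by
  ext s hs
  rw [e.map_apply, withDensity_apply _ (e.measurable hs), withDensity_apply _ hs,
    setLIntegral_map hs (hf.comp e.symm.measurable) e.measurable]
  simp only [Function.comp, e.symm_apply_apply]

noncomputable def gaussDen (n : ℕ) (x : EuclideanSpace ℝ (Fin n)) : ℝ≥0∞ :=
  ENNReal.ofReal ((Real.sqrt (2 * Real.pi))⁻¹ ^ n * Real.exp (-‖x‖ ^ 2 / 2))

lemma gaussDen_measurable (n : ℕ) : Measurable (gaussDen n) := by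
  unfold gaussDen
  exact ENNReal.measurable_ofReal.comp ((measurable_const.mul
    ((Real.continuous_exp.measurable).comp ((continuous_norm.measurable.pow_const 2).neg.div_const 2))))

lemma prod_gaussianPDF {n : ℕ} (x : EuclideanSpace ℝ (Fin n)) :
    (∏ i, gaussianPDF 0 1 (x i)) = gaussDen n x := by
  unfold gaussianPDF gaussDen
  rw [← ENNReal.ofReal_prod_of_nonneg (fun i _ => gaussianPDFReal_nonneg 0 1 (x i))]
  congr 1
  simp only [gaussianPDFReal_def, sub_zero, NNReal.coe_one, mul_one]
  rw [Finset.prod_mul_distrib, Finset.prod_const, Finset.card_univ, Fintype.card_fin,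
    ← Real.exp_sum]
  congr 1
  have hnorm : ‖x‖ ^ 2 = ∑ i, x i ^ 2 := by
    rw [EuclideanSpace.norm_eq, Real.sq_sqrt (Finset.sum_nonneg fun i _ => sq_nonneg _)]
    simp [Real.norm_eq_abs, sq_abs]
  rw [hnorm]
  congr 1
  simp [neg_div, Finset.sum_neg_distrib, Finset.sum_div]

lemma stdGaussian_eq_withDensity (n : ℕ) :
    stdGaussian n = (volume : Measure (EuclideanSpace ℝ (Fin n))).withDensity (gaussDen n) := by
  have h1 : (gaussianReal 0 1 : Measure ℝ) = volume.withDensity (gaussianPDF 0 1) :=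
    gaussianReal_of_var_ne_zero 0 one_ne_zero
  haveI : SigmaFinite ((volume : Measure ℝ).withDensity (gaussianPDF 0 1)) := by
    rw [← h1]; infer_instance
  unfold _root_.stdGaussian
  have h2 : (fun _ : Fin n => gaussianReal 0 1)
      = fun _ : Fin n => (volume : Measure ℝ).withDensity (gaussianPDF 0 1) := funext fun _ => h1
  have hG : Measurable fun x : Fin n → ℝ => ∏ i, gaussianPDF 0 1 (x i) :=
    Finset.measurable_prod _ fun i _ => (measurable_gaussianPDF 0 1).comp (measurable_pi_apply i)
  rw [h2, pi_withDensity_fin _ _ (fun _ => measurable_gaussianPDF 0 1),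
    map_withDensity_equiv (MeasurableEquiv.toLp 2 (Fin n → ℝ)) _ hG]
  have h3 : (Measure.pi fun _ : Fin n => (volume : Measure ℝ)).map
      (MeasurableEquiv.toLp 2 (Fin n → ℝ)) = volume := by
    rw [← MeasureTheory.volume_pi]
    exact (MeasurePreserving.symm _ (EuclideanSpace.volume_preserving_symm_measurableEquiv_toLp (Fin n))).map_eq
  rw [h3]
  congr 1
  funext x
  rw [← prod_gaussianPDF x]
  rfl

lemma stdGaussian_map_isometry {n : ℕ}
    (e : EuclideanSpace ℝ (Fin n) ≃ₗᵢ[ℝ] EuclideanSpace ℝ (Fin n)) :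
    (stdGaussian n).map e = stdGaussian n := by
  let em : EuclideanSpace ℝ (Fin n) ≃ᵐ EuclideanSpace ℝ (Fin n) :=
    e.toHomeomorph.toMeasurableEquiv
  have hcoe : (⇑e : _ → _) = ⇑em := rfl
  rw [stdGaussian_eq_withDensity, hcoe,
    map_withDensity_equiv em volume (gaussDen_measurable n), ← hcoe,
    e.measurePreserving.map_eq]
  congr 1
  funext x
  have : ‖(em.symm x : EuclideanSpace ℝ (Fin n))‖ = ‖x‖ := e.symm.norm_map x
  simp only [Function.comp, gaussDen, this]

instance stdGaussian_prob (n : ℕ) : IsProbabilityMeasure (stdGaussian n) := by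
  unfold _root_.stdGaussian
  exact Measure.isProbabilityMeasure_map (MeasurableEquiv.measurable _).aemeasurable

noncomputable def psiFun (n : ℕ) (w : EuclideanSpace ℝ (Fin (n+n))) :
    EuclideanSpace ℝ (Fin n) × EuclideanSpace ℝ (Fin n) :=
  ((WithLp.toLp 2 (fun i => w (Fin.castAdd n i)) : EuclideanSpace ℝ (Fin n)),
   (WithLp.toLp 2 (fun i => w (Fin.natAdd n i)) : EuclideanSpace ℝ (Fin n)))

lemma psi_measurePreserving (n : ℕ) :
    MeasurePreserving (psiFun n) (stdGaussian (n+n)) ((stdGaussian n).prod (stdGaussian n)) := by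
  have h1 : MeasurePreserving (MeasurableEquiv.toLp 2 (Fin (n+n) → ℝ)).symm
      (stdGaussian (n+n)) (Measure.pi fun _ : Fin (n+n) => gaussianReal 0 1) := by
    refine ⟨MeasurableEquiv.measurable _, ?_⟩
    unfold _root_.stdGaussian
    rw [Measure.map_map (MeasurableEquiv.measurable _) (MeasurableEquiv.measurable _)]
    simp
  have h2 : MeasurePreserving
      (MeasurableEquiv.piCongrLeft (fun _ : Fin (n+n) => ℝ) finSumFinEquiv).symm
      (Measure.pi fun _ : Fin (n+n) => gaussianReal 0 1)
      (Measure.pi fun _ : Fin n ⊕ Fin n => gaussianReal 0 1) :=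
    MeasurePreserving.symm _ (measurePreserving_piCongrLeft (fun _ => gaussianReal 0 1) _)
  have h3 : MeasurePreserving (MeasurableEquiv.sumPiEquivProdPi (fun _ : Fin n ⊕ Fin n => ℝ))
      (Measure.pi fun _ : Fin n ⊕ Fin n => gaussianReal 0 1)
      ((Measure.pi fun _ : Fin n => gaussianReal 0 1).prod
        (Measure.pi fun _ : Fin n => gaussianReal 0 1)) :=
    MeasurePreserving.symm _ (measurePreserving_sumPiEquivProdPi_symm (fun _ => gaussianReal 0 1))
  have h4 : MeasurePreserving
      (Prod.map (MeasurableEquiv.toLp 2 (Fin n → ℝ))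
        (MeasurableEquiv.toLp 2 (Fin n → ℝ)))
      ((Measure.pi fun _ : Fin n => gaussianReal 0 1).prod
        (Measure.pi fun _ : Fin n => gaussianReal 0 1))
      ((stdGaussian n).prod (stdGaussian n)) :=
    MeasurePreserving.prod ⟨MeasurableEquiv.measurable _, rfl⟩
      ⟨MeasurableEquiv.measurable _, rfl⟩
  have hcomp := h4.comp (h3.comp (h2.comp h1))
  have hfun : psiFun n = (Prod.map (MeasurableEquiv.toLp 2 (Fin n → ℝ))
        (MeasurableEquiv.toLp 2 (Fin n → ℝ))) ∘
      (MeasurableEquiv.sumPiEquivProdPi (fun _ : Fin n ⊕ Fin n => ℝ)) ∘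
      (MeasurableEquiv.piCongrLeft (fun _ : Fin (n+n) => ℝ) finSumFinEquiv).symm ∘
      (MeasurableEquiv.toLp 2 (Fin (n+n) → ℝ)).symm := by
    funext w
    rfl
  rw [hfun]
  exact hcomp

noncomputable def psiMeq (n : ℕ) : EuclideanSpace ℝ (Fin (n+n)) ≃ᵐ
    EuclideanSpace ℝ (Fin n) × EuclideanSpace ℝ (Fin n) :=
  (MeasurableEquiv.toLp 2 (Fin (n+n) → ℝ)).symm.trans
    (((MeasurableEquiv.piCongrLeft (fun _ : Fin (n+n) => ℝ) finSumFinEquiv).symm).trans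
      ((MeasurableEquiv.sumPiEquivProdPi (fun _ : Fin n ⊕ Fin n => ℝ)).trans
        ((MeasurableEquiv.toLp 2 (Fin n → ℝ)).prodCongr
          (MeasurableEquiv.toLp 2 (Fin n → ℝ)))))

lemma psiMeq_coe (n : ℕ) : ⇑(psiMeq n) = psiFun n := rfl

noncomputable def psiLin (n : ℕ) : EuclideanSpace ℝ (Fin (n+n)) ≃ₗ[ℝ]
    EuclideanSpace ℝ (Fin n) × EuclideanSpace ℝ (Fin n) where
  toFun := psiFun n
  invFun := (psiMeq n).symm
  map_add' x y := rfl
  map_smul' c x := rfl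
  left_inv w := (psiMeq n).toEquiv.left_inv w
  right_inv p := (psiMeq n).toEquiv.right_inv p

lemma psiLin_apply (n : ℕ) (w : EuclideanSpace ℝ (Fin (n+n))) :
    psiLin n w = psiFun n w := rfl

lemma psi_norm (n : ℕ) (w : EuclideanSpace ℝ (Fin (n+n))) :
    ‖(psiFun n w).1‖ ^ 2 + ‖(psiFun n w).2‖ ^ 2 = ‖w‖ ^ 2 := by
  have h : ∀ (m : ℕ) (v : EuclideanSpace ℝ (Fin m)), ‖v‖ ^ 2 = ∑ i, v i ^ 2 := by
    intro m v
    rw [EuclideanSpace.norm_eq, Real.sq_sqrt (Finset.sum_nonneg fun i _ => sq_nonneg _)]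
    simp [Real.norm_eq_abs, sq_abs]
  rw [h, h, h, Fin.sum_univ_add]
  rfl

lemma prod_map_rot {n : ℕ}
    (T : (EuclideanSpace ℝ (Fin n) × EuclideanSpace ℝ (Fin n)) ≃ₗ[ℝ]
      (EuclideanSpace ℝ (Fin n) × EuclideanSpace ℝ (Fin n)))
    (hT : ∀ p, ‖(T p).1‖ ^ 2 + ‖(T p).2‖ ^ 2 = ‖p.1‖ ^ 2 + ‖p.2‖ ^ 2) :
    ((stdGaussian n).prod (stdGaussian n)).map T = (stdGaussian n).prod (stdGaussian n) := by
  have hTmeas : Measurable (⇑T) :=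
    (LinearMap.continuous_of_finiteDimensional T.toLinearMap).measurable
  let e : EuclideanSpace ℝ (Fin (n+n)) ≃ₗ[ℝ] EuclideanSpace ℝ (Fin (n+n)) :=
    (psiLin n).trans (T.trans (psiLin n).symm)
  have hnorm : ∀ w, ‖e w‖ = ‖w‖ := by
    intro w
    have h1 : psiFun n (e w) = T (psiLin n w) := by
      show (psiLin n) ((psiLin n).symm (T (psiLin n w))) = _
      rw [LinearEquiv.apply_symm_apply]
    have h2 := psi_norm n (e w)
    rw [h1, hT] at h2
    have h4 := psi_norm n w
    have h3 : ‖e w‖ ^ 2 = ‖w‖ ^ 2 := by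
      rw [← h2, ← h4]
      rfl
    calc ‖e w‖ = Real.sqrt (‖e w‖ ^ 2) := (Real.sqrt_sq (norm_nonneg _)).symm
      _ = Real.sqrt (‖w‖ ^ 2) := by rw [h3]
      _ = ‖w‖ := Real.sqrt_sq (norm_nonneg _)
  let li : EuclideanSpace ℝ (Fin (n+n)) ≃ₗᵢ[ℝ] EuclideanSpace ℝ (Fin (n+n)) :=
    ⟨e, hnorm⟩
  have hΨ := psi_measurePreserving n
  have hli : Measurable (⇑li) :=
    (LinearMap.continuous_of_finiteDimensional (li.toLinearEquiv.toLinearMap)).measurable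
  calc ((stdGaussian n).prod (stdGaussian n)).map T
      = ((stdGaussian (n+n)).map (psiFun n)).map T := by rw [hΨ.map_eq]
    _ = (stdGaussian (n+n)).map (⇑T ∘ psiFun n) := by
        rw [Measure.map_map hTmeas hΨ.measurable]
    _ = (stdGaussian (n+n)).map (psiFun n ∘ ⇑li) := by
        congr 1
        funext w
        show T (psiFun n w) = psiFun n (e w)
        show T (psiLin n w) = psiLin n ((psiLin n).symm (T (psiLin n w)))
        rw [LinearEquiv.apply_symm_apply]
    _ = ((stdGaussian (n+n)).map li).map (psiFun n) := by
        rw [Measure.map_map hΨ.measurable hli]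
    _ = (stdGaussian n).prod (stdGaussian n) := by
        rw [stdGaussian_map_isometry li, hΨ.map_eq]

variable {n : ℕ} (E : Submodule ℝ (EuclideanSpace ℝ (Fin n)))

lemma proj_mem (x : EuclideanSpace ℝ (Fin n)) : proj E x ∈ E := (E.orthogonalProjectionOnto x).2

lemma proj_add (x y : EuclideanSpace ℝ (Fin n)) : proj E (x + y) = proj E x + proj E y := by
  simp [proj]

lemma proj_smul (c : ℝ) (x : EuclideanSpace ℝ (Fin n)) : proj E (c • x) = c • proj E x := by
  simp [proj]

lemma proj_sub (x y : EuclideanSpace ℝ (Fin n)) : proj E (x - y) = proj E x - proj E y := by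
  simp [proj]

lemma proj_of_mem {x : EuclideanSpace ℝ (Fin n)} (hx : x ∈ E) : proj E x = x := by
  simp [proj, Submodule.starProjection_eq_self_iff.mpr hx]

lemma proj_of_mem_orth {x : EuclideanSpace ℝ (Fin n)} (hx : x ∈ Eᗮ) : proj E x = 0 := by
  have := Submodule.orthogonalProjectionOnto_apply_of_mem_orthogonal (K := E) hx
  simp [proj, this]

lemma proj_add_proj_orth (x : EuclideanSpace ℝ (Fin n)) : proj E x + proj Eᗮ x = x :=
  Submodule.starProjection_add_starProjection_orthogonal (K := E) x

lemma proj_proj (x : EuclideanSpace ℝ (Fin n)) : proj E (proj E x) = proj E x :=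
  proj_of_mem E (proj_mem E x)

lemma proj_orth_proj (x : EuclideanSpace ℝ (Fin n)) : proj Eᗮ (proj E x) = 0 :=
  proj_of_mem_orth Eᗮ (Submodule.le_orthogonal_orthogonal E (proj_mem E x))

lemma proj_proj_orth (x : EuclideanSpace ℝ (Fin n)) : proj E (proj Eᗮ x) = 0 :=
  proj_of_mem_orth E (proj_mem Eᗮ x)

lemma proj_orth_proj_orth (x : EuclideanSpace ℝ (Fin n)) : proj Eᗮ (proj Eᗮ x) = proj Eᗮ x :=
  proj_of_mem Eᗮ (proj_mem Eᗮ x)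

lemma norm_sq_decomp (x : EuclideanSpace ℝ (Fin n)) :
    ‖x‖ ^ 2 = ‖proj E x‖ ^ 2 + ‖proj Eᗮ x‖ ^ 2 := by
  have hi : ⟪proj E x, proj Eᗮ x⟫ = 0 :=
    Submodule.inner_right_of_mem_orthogonal (proj_mem E x) (proj_mem Eᗮ x)
  have := norm_add_sq_real (proj E x) (proj Eᗮ x)
  rw [proj_add_proj_orth] at this
  rw [this, hi]
  ring

lemma proj_continuous : Continuous (proj E) :=
  Continuous.subtype_val (ContinuousLinearMap.continuous (E.orthogonalProjectionOnto))

lemma expand_norm_sq (a b : EuclideanSpace ℝ (Fin n)) (s t : ℝ) :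
    ‖s • a + t • b‖ ^ 2 = s^2 * ‖a‖^2 + 2*(s*t)*⟪a, b⟫ + t^2 * ‖b‖^2 := by
  rw [norm_add_sq_real]
  rw [real_inner_smul_left, real_inner_smul_right]
  simp [norm_smul, mul_pow]
  ring


noncomputable def rotFun (c₁ c₂ : ℝ)
    (p : EuclideanSpace ℝ (Fin n) × EuclideanSpace ℝ (Fin n)) :
    EuclideanSpace ℝ (Fin n) × EuclideanSpace ℝ (Fin n) :=
  (proj E p.1 + c₁ • proj Eᗮ p.1 - c₂ • proj Eᗮ p.2,
   proj E p.2 + c₂ • proj Eᗮ p.1 + c₁ • proj Eᗮ p.2)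

variable {c₁ c₂ : ℝ}

lemma rot1_E (p) : proj E (rotFun E c₁ c₂ p).1 = proj E p.1 := by
  simp [rotFun, proj_add, proj_sub, proj_smul, proj_proj, proj_proj_orth]

lemma rot1_O (p) : proj Eᗮ (rotFun E c₁ c₂ p).1 = c₁ • proj Eᗮ p.1 - c₂ • proj Eᗮ p.2 := by
  simp [rotFun, proj_add, proj_sub, proj_smul, proj_orth_proj, proj_orth_proj_orth]

lemma rot2_E (p) : proj E (rotFun E c₁ c₂ p).2 = proj E p.2 := by
  simp [rotFun, proj_add, proj_sub, proj_smul, proj_proj, proj_proj_orth]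

lemma rot2_O (p) : proj Eᗮ (rotFun E c₁ c₂ p).2 = c₂ • proj Eᗮ p.1 + c₁ • proj Eᗮ p.2 := by
  simp [rotFun, proj_add, proj_sub, proj_smul, proj_orth_proj, proj_orth_proj_orth]

lemma rot_inv (h : c₁^2 + c₂^2 = 1) (p) :
    rotFun E c₁ (-c₂) (rotFun E c₁ c₂ p) = p := by
  refine Prod.ext ?_ ?_
  · show proj E (rotFun E c₁ c₂ p).1 + c₁ • proj Eᗮ (rotFun E c₁ c₂ p).1
      - (-c₂) • proj Eᗮ (rotFun E c₁ c₂ p).2 = p.1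
    rw [rot1_E, rot1_O, rot2_O]
    have hm : c₁ • (c₁ • proj Eᗮ p.1 - c₂ • proj Eᗮ p.2)
        - (-c₂) • (c₂ • proj Eᗮ p.1 + c₁ • proj Eᗮ p.2)
        = (c₁^2 + c₂^2) • proj Eᗮ p.1 := by module
    rw [add_sub_assoc, hm, h, one_smul, proj_add_proj_orth]
  · show proj E (rotFun E c₁ c₂ p).2 + (-c₂) • proj Eᗮ (rotFun E c₁ c₂ p).1
      + c₁ • proj Eᗮ (rotFun E c₁ c₂ p).2 = p.2
    rw [rot2_E, rot1_O, rot2_O]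
    have hm : (-c₂) • (c₁ • proj Eᗮ p.1 - c₂ • proj Eᗮ p.2)
        + c₁ • (c₂ • proj Eᗮ p.1 + c₁ • proj Eᗮ p.2)
        = (c₁^2 + c₂^2) • proj Eᗮ p.2 := by module
    rw [add_assoc, hm, h, one_smul, proj_add_proj_orth]

noncomputable def rotEquiv (c₁ c₂ : ℝ) (h : c₁^2 + c₂^2 = 1) :
    (EuclideanSpace ℝ (Fin n) × EuclideanSpace ℝ (Fin n)) ≃ₗ[ℝ]
      (EuclideanSpace ℝ (Fin n) × EuclideanSpace ℝ (Fin n)) where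
  toFun := rotFun E c₁ c₂
  invFun := rotFun E c₁ (-c₂)
  map_add' x y := by
    refine Prod.ext ?_ ?_ <;>
      simp only [rotFun, Prod.fst_add, Prod.snd_add, proj_add, smul_add] <;> abel
  map_smul' c x := by
    refine Prod.ext ?_ ?_ <;>
      simp only [rotFun, Prod.smul_fst, Prod.smul_snd, proj_smul, RingHom.id_apply,
        smul_sub, smul_add, smul_comm c] <;> abel
  left_inv p := rot_inv E h p
  right_inv p := by
    have h' : c₁^2 + (-c₂)^2 = 1 := by rw [neg_pow]; simpa using h
    have := rot_inv E h' p
    rwa [neg_neg] at this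

lemma rot_norm (h : c₁^2 + c₂^2 = 1) (p) :
    ‖(rotFun E c₁ c₂ p).1‖^2 + ‖(rotFun E c₁ c₂ p).2‖^2 = ‖p.1‖^2 + ‖p.2‖^2 := by
  rw [norm_sq_decomp E (rotFun E c₁ c₂ p).1, norm_sq_decomp E (rotFun E c₁ c₂ p).2,
    rot1_E, rot1_O, rot2_E, rot2_O, norm_sq_decomp E p.1, norm_sq_decomp E p.2]
  have h1 : c₁ • proj Eᗮ p.1 - c₂ • proj Eᗮ p.2
      = c₁ • proj Eᗮ p.1 + (-c₂) • proj Eᗮ p.2 := by module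
  rw [h1, expand_norm_sq, expand_norm_sq]
  linear_combination (‖proj Eᗮ p.1‖^2 + ‖proj Eᗮ p.2‖^2) * h

end Aux

section Glue

open ProbabilityTheory

variable {n : ℕ} (E : Submodule ℝ (EuclideanSpace ℝ (Fin n)))

lemma stdGaussian_prod_map_rot {c₁ c₂ : ℝ} (h : c₁^2 + c₂^2 = 1) :
    ((stdGaussian n).prod (stdGaussian n)).map (rotFun E c₁ c₂)
      = (stdGaussian n).prod (stdGaussian n) :=
  prod_map_rot (rotEquiv E c₁ c₂ h) (rot_norm E h)

lemma rot_continuous (c₁ c₂ : ℝ) : Continuous (rotFun E c₁ c₂) := by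
  refine Continuous.prodMk ?_ ?_
  · exact (((proj_continuous E).comp continuous_fst).add
      (((proj_continuous Eᗮ).comp continuous_fst).const_smul c₁)).sub
      (((proj_continuous Eᗮ).comp continuous_snd).const_smul c₂)
  · exact (((proj_continuous E).comp continuous_snd).add
      (((proj_continuous Eᗮ).comp continuous_fst).const_smul c₂)).add
      (((proj_continuous Eᗮ).comp continuous_snd).const_smul c₁)

lemma measurable_projSum :
    Measurable (fun p : EuclideanSpace ℝ (Fin n) × EuclideanSpace ℝ (Fin n) =>
      proj E p.1 + proj Eᗮ p.2) :=
  (((proj_continuous E).comp continuous_fst).add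
    ((proj_continuous Eᗮ).comp continuous_snd)).measurable

lemma map_projSum :
    ((stdGaussian n).prod (stdGaussian n)).map
      (fun p => proj E p.1 + proj Eᗮ p.2) = stdGaussian n := by
  have hrot := stdGaussian_prod_map_rot E (c₁ := 0) (c₂ := -1) (by norm_num)
  have hmeas := ((rot_continuous E 0 (-1)).measurable)
  calc ((stdGaussian n).prod (stdGaussian n)).map (fun p => proj E p.1 + proj Eᗮ p.2)
      = (((stdGaussian n).prod (stdGaussian n)).map (rotFun E 0 (-1))).map Prod.fst := by
        rw [Measure.map_map measurable_fst hmeas]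
        congr 1
        funext p
        simp [rotFun]
    _ = ((stdGaussian n).prod (stdGaussian n)).map Prod.fst := by rw [hrot]
    _ = stdGaussian n := by
        rw [Measure.map_fst_prod]
        simp

lemma integrable_of_bound {α : Type*} [MeasurableSpace α] (μ : Measure α)
    [IsFiniteMeasure μ] (f : α → ℝ) (hf : AEStronglyMeasurable f μ) (C : ℝ)
    (h : ∀ x, |f x| ≤ C) : Integrable f μ :=
  Integrable.mono' (integrable_const C) hf
    (Filter.Eventually.of_forall fun x => by simpa [Real.norm_eq_abs] using h x)

lemma abs_integral_le_one {α : Type*} [MeasurableSpace α] (μ : Measure α)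
    [IsProbabilityMeasure μ] {g : α → ℝ} (hg : AEStronglyMeasurable g μ)
    (h : ∀ x, |g x| ≤ 1) : |∫ x, g x ∂μ| ≤ 1 := by
  calc |∫ x, g x ∂μ| ≤ ∫ x, |g x| ∂μ := by
        simpa [Real.norm_eq_abs] using norm_integral_le_integral_norm (μ := μ) g
    _ ≤ ∫ _, (1:ℝ) ∂μ := integral_mono (integrable_of_bound μ g hg 1 h).abs
        (integrable_const 1) (fun x => h x)
    _ = 1 := by simp

lemma measurable_ouOp (t : ℝ) (f : EuclideanSpace ℝ (Fin n) → ℝ) (hf : Measurable f) :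
    Measurable (ouOp t f) := by
  have hm : Measurable (fun q : EuclideanSpace ℝ (Fin n) × EuclideanSpace ℝ (Fin n) =>
      f (Real.exp (-t) • q.1 + Real.sqrt (1 - Real.exp (-2 * t)) • q.2)) :=
    hf.comp ((measurable_fst.const_smul (Real.exp (-t))).add
      (measurable_snd.const_smul (Real.sqrt (1 - Real.exp (-2 * t)))))
  exact (MeasureTheory.StronglyMeasurable.integral_prod_right'
    (hm.stronglyMeasurable)).measurable

lemma measurable_avg (f : EuclideanSpace ℝ (Fin n) → ℝ) (hf : Measurable f) :
    Measurable (avg E f) := by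
  have hm : Measurable (fun q : EuclideanSpace ℝ (Fin n) × EuclideanSpace ℝ (Fin n) =>
      f (proj E q.1 + proj Eᗮ q.2)) := hf.comp (measurable_projSum E)
  exact (MeasureTheory.StronglyMeasurable.integral_prod_right'
    (hm.stronglyMeasurable)).measurable

lemma abs_ouOp_le (t : ℝ) (f : EuclideanSpace ℝ (Fin n) → ℝ) (hf : Measurable f)
    (h : ∀ x, |f x| ≤ 1) (x : EuclideanSpace ℝ (Fin n)) : |ouOp t f x| ≤ 1 := by
  refine abs_integral_le_one _ ?_ (fun y => h _)
  exact (hf.comp (measurable_const.add (measurable_id.const_smul (Real.sqrt (1 - Real.exp (-2 * t)))))).aestronglyMeasurable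

lemma abs_avg_le (f : EuclideanSpace ℝ (Fin n) → ℝ) (hf : Measurable f)
    (h : ∀ x, |f x| ≤ 1) (x : EuclideanSpace ℝ (Fin n)) : |avg E f x| ≤ 1 := by
  refine abs_integral_le_one _ ?_ (fun z => h _)
  exact (hf.comp (measurable_const.add (proj_continuous Eᗮ).measurable)).aestronglyMeasurable

lemma ouOp_avg_comm (t : ℝ) (ht : 0 < t) (f : EuclideanSpace ℝ (Fin n) → ℝ)
    (hf : Measurable f) (hb : ∀ x, |f x| ≤ 1) (x : EuclideanSpace ℝ (Fin n)) :
    ouOp t (avg E f) x = avg E (ouOp t f) x := by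
  have hexp : Real.exp (-2*t) ≤ 1 := Real.exp_le_one_iff.mpr (by linarith)
  have hσ2 : Real.sqrt (1 - Real.exp (-2*t)) ^ 2 = 1 - Real.exp (-2*t) :=
    Real.sq_sqrt (by linarith)
  have hc2 : Real.exp (-t) ^ 2 + Real.sqrt (1 - Real.exp (-2*t)) ^ 2 = 1 := by
    rw [hσ2, sq, ← Real.exp_add]
    have : -t + -t = -2 * t := by ring
    rw [this]
    ring
  set c : ℝ := Real.exp (-t)
  set σ : ℝ := Real.sqrt (1 - Real.exp (-2*t))
  set D := stdGaussian n with hD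
  set G : EuclideanSpace ℝ (Fin n) × EuclideanSpace ℝ (Fin n) → ℝ :=
    fun p => f (c • proj E x + σ • proj E p.1 + proj Eᗮ p.2) with hG
  set H : EuclideanSpace ℝ (Fin n) × EuclideanSpace ℝ (Fin n) → ℝ :=
    fun p => f (c • proj E x + σ • p.1 + c • proj Eᗮ p.2) with hH
  have hGmeas : Measurable G := hf.comp
    ((measurable_const.add ((((proj_continuous E).comp continuous_fst).measurable).const_smul σ)).add
      (((proj_continuous Eᗮ).comp continuous_snd).measurable))
  have hHmeas : Measurable H := hf.comp
    ((measurable_const.add (measurable_fst.const_smul σ)).add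
      ((((proj_continuous Eᗮ).comp continuous_snd).measurable).const_smul c))
  have hGint : Integrable G (D.prod D) :=
    integrable_of_bound _ _ hGmeas.aestronglyMeasurable 1 (fun p => hb _)
  have h1 : ouOp t (avg E f) x = ∫ p, G p ∂(D.prod D) := by
    have hiter : ouOp t (avg E f) x = ∫ y, ∫ z, G (y, z) ∂D ∂D := by
      unfold ouOp avg
      refine integral_congr_ae (Filter.Eventually.of_forall fun y => ?_)
      refine integral_congr_ae (Filter.Eventually.of_forall fun z => ?_)
      simp only [hG]
      congr 1
      rw [proj_add, proj_smul, proj_smul]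
    rw [hiter, integral_integral hGint]
  have h2 : avg E (ouOp t f) x = ∫ p, H p ∂(D.prod D) := by
    have hswap : ∫ p, H p ∂(D.prod D) = ∫ q, H (q.2, q.1) ∂(D.prod D) := by
      calc ∫ p, H p ∂(D.prod D) = ∫ p, H p ∂((D.prod D).map Prod.swap) := by
            rw [Measure.prod_swap]
        _ = ∫ q, H (Prod.swap q) ∂(D.prod D) :=
            integral_map measurable_swap.aemeasurable hHmeas.aestronglyMeasurable
    have hint' : Integrable (Function.uncurry fun z y :
        EuclideanSpace ℝ (Fin n) => H (y, z)) (D.prod D) :=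
      integrable_of_bound _ _ (hHmeas.comp measurable_swap).aestronglyMeasurable 1 (fun p => hb _)
    have hiter : avg E (ouOp t f) x = ∫ z, ∫ y, H (y, z) ∂D ∂D := by
      unfold avg ouOp
      refine integral_congr_ae (Filter.Eventually.of_forall fun z => ?_)
      refine integral_congr_ae (Filter.Eventually.of_forall fun y => ?_)
      simp only [hH]
      congr 1
      rw [smul_add]
      module
    rw [hiter, hswap]
    exact integral_integral (f := fun z y => H (y, z)) hint'
  have h3 : ∫ p, H p ∂(D.prod D) = ∫ p, G p ∂(D.prod D) := by
    have hfeq : H = G ∘ rotFun E c σ := by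
      funext p
      simp only [hG, hH, Function.comp_apply]
      congr 1
      rw [rot1_E, rot2_O]
      have hsp : σ • proj E p.1 + σ • proj Eᗮ p.1 = σ • p.1 := by
        rw [← smul_add, proj_add_proj_orth]
      rw [← hsp]
      module
    rw [hfeq]
    calc ∫ p, (G ∘ rotFun E c σ) p ∂(D.prod D)
        = ∫ p, G p ∂((D.prod D).map (rotFun E c σ)) :=
          (integral_map (rot_continuous E c σ).measurable.aemeasurable
            hGmeas.aestronglyMeasurable).symm
      _ = ∫ p, G p ∂(D.prod D) := by rw [stdGaussian_prod_map_rot E hc2]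
  rw [h1, h2, h3]

end Glue

/-- if `f : ℝ^n → [-1,1]` is `s`-smooth then so is `A_E f`. -/
theorem avg_sSmooth {n : ℕ} (E : Submodule ℝ (EuclideanSpace ℝ (Fin n))) (s : ℝ) (hs : 0 < s)
    (f : EuclideanSpace ℝ (Fin n) → ℝ) (hmeas : Measurable f)
    (hrange : ∀ x, f x ∈ Set.Icc (-1 : ℝ) 1) (hsm : SSmooth s f) :
    (∀ x, avg E f x ∈ Set.Icc (-1 : ℝ) 1) ∧ SSmooth s (avg E f) := by
  have hb : ∀ x, |f x| ≤ 1 := fun x => abs_le.mpr ⟨(hrange x).1, (hrange x).2⟩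
  have havgb : ∀ x, |avg E f x| ≤ 1 := abs_avg_le E f hmeas hb
  have havgmeas : Measurable (avg E f) := measurable_avg E f hmeas
  refine ⟨fun x => Set.mem_Icc.mpr (abs_le.mp (havgb x)), ?_⟩
  intro t ht
  have houmeas : Measurable (ouOp t f) := measurable_ouOp t f hmeas
  have houb : ∀ x, |ouOp t f x| ≤ 1 := abs_ouOp_le t f hmeas hb
  have hgmeas : Measurable fun w => f w - ouOp t f w := hmeas.sub houmeas
  have hgb : ∀ w, |f w - ouOp t f w| ≤ 2 := fun w =>
    (abs_sub _ _).trans (by have := hb w; have := houb w; linarith)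
  have hmapmeas := measurable_projSum E
  have habsmeas : Measurable fun w => |f w - ouOp t f w| := hgmeas.abs
  have hinner_meas : ∀ x, Measurable fun z : EuclideanSpace ℝ (Fin n) =>
      proj E x + proj Eᗮ z := fun x => measurable_const.add (proj_continuous Eᗮ).measurable
  have hcomm : ∀ x, ouOp t (avg E f) x = avg E (ouOp t f) x := ouOp_avg_comm E t ht f hmeas hb
  have hkey : ∀ x, avg E f x - ouOp t (avg E f) x
      = ∫ z, (f (proj E x + proj Eᗮ z) - ouOp t f (proj E x + proj Eᗮ z)) ∂(stdGaussian n) := by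
    intro x
    rw [hcomm x]
    unfold avg
    rw [← integral_sub
      (integrable_of_bound _ (fun z => f (proj E x + proj Eᗮ z))
        (hmeas.comp (hinner_meas x)).aestronglyMeasurable 1 fun z => hb _)
      (integrable_of_bound _ (fun z => ouOp t f (proj E x + proj Eᗮ z))
        (houmeas.comp (hinner_meas x)).aestronglyMeasurable 1 fun z => houb _)]
  have hprodint : Integrable (fun p : EuclideanSpace ℝ (Fin n) × EuclideanSpace ℝ (Fin n) =>
      |f (proj E p.1 + proj Eᗮ p.2) - ouOp t f (proj E p.1 + proj Eᗮ p.2)|)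
      ((stdGaussian n).prod (stdGaussian n)) :=
    integrable_of_bound _ _ (habsmeas.comp hmapmeas).aestronglyMeasurable 2
      (fun p => by rw [abs_abs]; exact hgb _)
  have hlhs_int : Integrable (fun x => |avg E f x - ouOp t (avg E f) x|) (stdGaussian n) :=
    integrable_of_bound _ _ (havgmeas.sub (measurable_ouOp t _ havgmeas)).abs.aestronglyMeasurable
      2 (fun x => by
        rw [abs_abs]
        exact (abs_sub _ _).trans (by
          have h1 := havgb x
          have h2 := abs_ouOp_le t _ havgmeas havgb x
          linarith))
  have hrhsfun_meas : Measurable fun x => ∫ z,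
      |f (proj E x + proj Eᗮ z) - ouOp t f (proj E x + proj Eᗮ z)| ∂(stdGaussian n) :=
    (MeasureTheory.StronglyMeasurable.integral_prod_right'
      ((habsmeas.comp hmapmeas).stronglyMeasurable)).measurable
  have hrhs_int : Integrable (fun x => ∫ z,
      |f (proj E x + proj Eᗮ z) - ouOp t f (proj E x + proj Eᗮ z)| ∂(stdGaussian n))
      (stdGaussian n) :=
    integrable_of_bound _ _ hrhsfun_meas.aestronglyMeasurable 2 (fun x => by
      rw [abs_of_nonneg (integral_nonneg fun z => abs_nonneg _)]
      calc ∫ z, |f (proj E x + proj Eᗮ z) - ouOp t f (proj E x + proj Eᗮ z)| ∂(stdGaussian n)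
          ≤ ∫ _, (2:ℝ) ∂(stdGaussian n) := integral_mono
            (integrable_of_bound _ _ (habsmeas.comp (hinner_meas x)).aestronglyMeasurable 2
              fun z => by rw [abs_abs]; exact hgb _)
            (integrable_const 2) (fun z => hgb _)
        _ = 2 := by simp)
  calc ∫ x, |avg E f x - ouOp t (avg E f) x| ∂(stdGaussian n)
      ≤ ∫ x, ∫ z, |f (proj E x + proj Eᗮ z) - ouOp t f (proj E x + proj Eᗮ z)|
          ∂(stdGaussian n) ∂(stdGaussian n) := by
        refine integral_mono hlhs_int hrhs_int fun x => ?_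
        rw [hkey x]
        simpa [Real.norm_eq_abs] using norm_integral_le_integral_norm (μ := stdGaussian n)
          (fun z => f (proj E x + proj Eᗮ z) - ouOp t f (proj E x + proj Eᗮ z))
    _ = ∫ p, |f (proj E p.1 + proj Eᗮ p.2) - ouOp t f (proj E p.1 + proj Eᗮ p.2)|
          ∂((stdGaussian n).prod (stdGaussian n)) := integral_integral hprodint
    _ = ∫ w, |f w - ouOp t f w|
          ∂(((stdGaussian n).prod (stdGaussian n)).map fun p => proj E p.1 + proj Eᗮ p.2) :=
        (integral_map hmapmeas.aemeasurable habsmeas.aestronglyMeasurable).symm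
    _ = ∫ w, |f w - ouOp t f w| ∂(stdGaussian n) := by rw [map_projSum E]
    _ ≤ s * Real.sqrt t := hsm t ht
end

section
/- Let m ≤ n be natural numbers and let X be a real m×n matrix of rank m. Then there exists a real m×n matrix Y with orthonormal rows (i.e., Y·Yᵀ = I_m) such that ‖X − Y‖_F ≤ ‖X·Xᵀ − I_m‖_F. -/
open MeasureTheory Matrix

lemma sum_sq_eq_trace {a b : ℕ} (M : Matrix (Fin a) (Fin b) ℝ) :
    ∑ i, ∑ j, (M i j)^2 = (M * Mᵀ).trace := by
  simp [Matrix.trace, Matrix.mul_apply, Matrix.diag, sq]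

/-- any full-rank `m×n` matrix is approximated by a matrix with
orthonormal rows up to `‖X·Xᵀ − I‖_F` in Frobenius norm. -/
theorem approximate_projection {m n : ℕ} (hmn : m ≤ n) (X : Matrix (Fin m) (Fin n) ℝ)
    (hrank : X.rank = m) :
    ∃ Y : Matrix (Fin m) (Fin n) ℝ, Y * Yᵀ = 1 ∧
      frobNorm (X - Y) ≤ frobNorm (X * Xᵀ - 1) := by
  classical
  set A := X * Xᵀ with hAdef
  have hA : A.IsHermitian := by
    rw [Matrix.IsHermitian, Matrix.conjTranspose_eq_transpose_of_trivial, hAdef,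
      Matrix.transpose_mul, Matrix.transpose_transpose]
  have hrk : A.rank = m := by rw [hAdef, Matrix.rank_self_mul_transpose, hrank]
  have hsurj : Function.Surjective A.mulVecLin := by
    rw [← LinearMap.range_eq_top]
    apply Submodule.eq_top_of_finrank_eq
    rw [← Matrix.rank, hrk]
    simp
  have hinj : Function.Injective A.mulVecLin :=
    (LinearMap.injective_iff_surjective (f := A.mulVecLin)).2 hsurj
  have hPD : A.PosDef := by
    refine Matrix.posDef_iff_dotProduct_mulVec.2 ⟨hA, fun v hv => ?_⟩
    have hAv : A *ᵥ v ≠ 0 := fun h => hv (hinj (by simpa using h))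
    have hw : Xᵀ *ᵥ v ≠ 0 := by
      intro h
      apply hAv
      rw [hAdef, ← Matrix.mulVec_mulVec, h, Matrix.mulVec_zero]
    have heq : star v ⬝ᵥ A *ᵥ v = (Xᵀ *ᵥ v) ⬝ᵥ (Xᵀ *ᵥ v) := by
      rw [hAdef, ← Matrix.mulVec_mulVec, Matrix.dotProduct_mulVec]
      simp [Matrix.vecMul_transpose, Matrix.mulVec_transpose]
    rw [heq]
    have h1 : 0 ≤ (Xᵀ *ᵥ v) ⬝ᵥ (Xᵀ *ᵥ v) := Finset.sum_nonneg fun i _ => mul_self_nonneg _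
    rcases h1.lt_or_eq with h | h
    · exact h
    · exact absurd (dotProduct_self_eq_zero.1 h.symm) hw
  -- spectral decomposition
  set d : Fin m → ℝ := hA.eigenvalues with hddef
  have hd : ∀ i, 0 < d i := fun i => hPD.eigenvalues_pos i
  set U : Matrix (Fin m) (Fin m) ℝ := (hA.eigenvectorUnitary : Matrix (Fin m) (Fin m) ℝ)
    with hUdef
  have hspec : A = U * diagonal d * Uᵀ := by
    have := hA.spectral_theorem
    simp only [Unitary.conjStarAlgAut_apply] at this
    rw [← Matrix.conjTranspose_eq_transpose_of_trivial, ← Matrix.star_eq_conjTranspose]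
    exact this
  have hU2 : Uᵀ * U = 1 := by
    have := hA.eigenvectorUnitary.2
    rw [Matrix.mem_unitaryGroup_iff'] at this
    rw [← Matrix.conjTranspose_eq_transpose_of_trivial, ← Matrix.star_eq_conjTranspose]
    exact this
  have hU1 : U * Uᵀ = 1 := by
    have := hA.eigenvectorUnitary.2
    rw [Matrix.mem_unitaryGroup_iff] at this
    rw [← Matrix.conjTranspose_eq_transpose_of_trivial, ← Matrix.star_eq_conjTranspose]
    exact this
  -- conjugation multiplication lemma
  have hmul : ∀ e f : Fin m → ℝ,
      (U * diagonal e * Uᵀ) * (U * diagonal f * Uᵀ) = U * diagonal (fun i => e i * f i) * Uᵀ := by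
    intro e f
    simp only [← Matrix.mul_assoc]
    rw [Matrix.mul_assoc (U * diagonal e) Uᵀ U, hU2, Matrix.mul_one,
      Matrix.mul_assoc U (diagonal e) (diagonal f), Matrix.diagonal_mul_diagonal]
  have htrace : ∀ e : Fin m → ℝ, (U * diagonal e * Uᵀ).trace = ∑ i, e i := by
    intro e
    rw [Matrix.trace_mul_comm, ← Matrix.mul_assoc, hU2, Matrix.one_mul, Matrix.trace_diagonal]
  -- define B and Y
  set g : Fin m → ℝ := fun i => (Real.sqrt (d i))⁻¹ with hgdef
  set B : Matrix (Fin m) (Fin m) ℝ := U * diagonal g * Uᵀ with hBdef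
  set Y : Matrix (Fin m) (Fin n) ℝ := B * X with hYdef
  have hBsymm : Bᵀ = B := by
    rw [hBdef, Matrix.transpose_mul, Matrix.transpose_mul, Matrix.transpose_transpose,
      Matrix.diagonal_transpose, Matrix.mul_assoc]
  have hsq : ∀ i, Real.sqrt (d i) * Real.sqrt (d i) = d i := fun i =>
    Real.mul_self_sqrt (hd i).le
  have hsqpos : ∀ i, 0 < Real.sqrt (d i) := fun i => Real.sqrt_pos.2 (hd i)
  have hBAB : B * A * B = 1 := by
    have hgd : (fun i => g i * d i * g i) = fun _ => (1:ℝ) := by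
      funext i
      rw [hgdef]
      have hs := (hsqpos i).ne'
      field_simp
      rw [Real.sq_sqrt (hd i).le]
    rw [hBdef, hspec, hmul, hmul, hgd, Matrix.diagonal_one, Matrix.mul_one, hU1]
  refine ⟨Y, ?_, ?_⟩
  · -- Y * Yᵀ = 1
    have : Y * Yᵀ = B * A * Bᵀ := by
      rw [hYdef, Matrix.transpose_mul, hAdef, Matrix.mul_assoc, ← Matrix.mul_assoc X,
        ← Matrix.mul_assoc B]
    rw [this, hBsymm, hBAB]
  · -- Frobenius bound
    have hXY : X - Y = (1 - B) * X := by
      rw [Matrix.sub_mul, Matrix.one_mul, hYdef]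
    have h1B : 1 - B = U * diagonal (fun i => 1 - g i) * Uᵀ := by
      have h1 : (1 : Matrix (Fin m) (Fin m) ℝ) = U * diagonal (fun _ => (1:ℝ)) * Uᵀ := by
        rw [Matrix.diagonal_one, Matrix.mul_one, hU1]
      rw [hBdef]
      nth_rewrite 1 [h1]
      rw [← Matrix.sub_mul, ← Matrix.mul_sub, Matrix.diagonal_sub]
    have hfrob1 : ∑ i, ∑ j, ((X - Y) i j)^2 = ∑ i, (1 - g i) * d i * (1 - g i) := by
      rw [sum_sq_eq_trace, hXY, Matrix.transpose_mul]
      have : (1 - B) * X * (Xᵀ * (1 - B)ᵀ) = (1 - B) * A * (1 - B) := by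
        rw [Matrix.transpose_sub, Matrix.transpose_one, hBsymm, hAdef,
          Matrix.mul_assoc (1 - B), ← Matrix.mul_assoc X, ← Matrix.mul_assoc (1 - B)]
      rw [this, h1B, hspec, hmul, hmul, htrace]
    have hfrob2 : ∑ i, ∑ j, ((A - 1) i j)^2 = ∑ i, (d i - 1)^2 := by
      rw [sum_sq_eq_trace]
      have hA1 : A - 1 = U * diagonal (fun i => d i - 1) * Uᵀ := by
        have h1 : (1 : Matrix (Fin m) (Fin m) ℝ) = U * diagonal (fun _ => (1:ℝ)) * Uᵀ := by
          rw [Matrix.diagonal_one, Matrix.mul_one, hU1]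
        nth_rewrite 1 [h1]
        rw [hspec, ← Matrix.sub_mul, ← Matrix.mul_sub, Matrix.diagonal_sub]
      have hAt : Aᵀ = A := by
        rw [← Matrix.conjTranspose_eq_transpose_of_trivial]
        exact hA
      have hA1t : (A - 1)ᵀ = A - 1 := by
        rw [Matrix.transpose_sub, Matrix.transpose_one, hAt]
      rw [hA1t, hA1, hmul, htrace]
      congr 1
      ext i
      ring
    rw [frobNorm, frobNorm, hfrob1, hfrob2]
    apply Real.sqrt_le_sqrt
    apply Finset.sum_le_sum
    intro i _
    have hs := hsqpos i
    have hq := hsq i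
    rw [hgdef]
    have key : (1 - (Real.sqrt (d i))⁻¹) * d i * (1 - (Real.sqrt (d i))⁻¹)
        = (Real.sqrt (d i) - 1)^2 := by
      have hne := hs.ne'
      field_simp
      nlinarith [hq]
    rw [key]
    nlinarith [hq, hs, sq_nonneg (Real.sqrt (d i) - 1),
      mul_nonneg (sq_nonneg (Real.sqrt (d i) - 1)) (by nlinarith : (0:ℝ) ≤ d i + 2 * Real.sqrt (d i))]
end

section
/- Let n ∈ ℕ, let E and E' be linear subspaces of ℝ^n, and let f : ℝ^n → ℝ be c-Lipschitz. Then ∫ |(A_E f)(x) − (A_{E'} f)(x)| dγ_n(x) ≤ √2 · c · ‖Π_E − Π_{E'}‖_F, where Π_E and Π_{E'} are viewed as n×n matrices and ‖·‖_F is the Frobenius norm. -/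
open MeasureTheory

open ProbabilityTheory Real
open scoped ENNReal NNReal

noncomputable def γ : Measure ℝ := gaussianReal 0 1

instance : IsProbabilityMeasure γ := by unfold γ; infer_instance

lemma phi_def (x : ℝ) : gaussianPDFReal 0 1 x
    = (Real.sqrt (2*Real.pi))⁻¹ * Real.exp (-(1/2) * x^2) := by
  unfold gaussianPDFReal
  norm_num
  ring_nf
  exact Or.inl trivial

lemma gamma_eq : γ = volume.withDensity (fun x => ENNReal.ofReal (gaussianPDFReal 0 1 x)) :=
  gaussianReal_of_var_ne_zero 0 one_ne_zero

lemma integral_gamma (g : ℝ → ℝ) : ∫ x, g x ∂γ = ∫ x, gaussianPDFReal 0 1 x * g x := by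
  rw [gamma_eq]
  have h1 : (fun x => ENNReal.ofReal (gaussianPDFReal 0 1 x))
      = fun x => ((gaussianPDFReal 0 1 x).toNNReal : ℝ≥0∞) := rfl
  rw [h1, integral_withDensity_eq_integral_smul
    (measurable_gaussianPDFReal 0 1).real_toNNReal g]
  congr 1; funext x
  simp [NNReal.smul_def, Real.coe_toNNReal _ (gaussianPDFReal_nonneg 0 1 x)]

lemma integrable_gamma_iff (g : ℝ → ℝ) :
    Integrable g γ ↔ Integrable (fun x => gaussianPDFReal 0 1 x * g x) volume := by
  rw [gamma_eq]
  have h1 : (fun x => ENNReal.ofReal (gaussianPDFReal 0 1 x))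
      = fun x => ((gaussianPDFReal 0 1 x).toNNReal : ℝ≥0∞) := rfl
  rw [h1, integrable_withDensity_iff_integrable_smul
    (measurable_gaussianPDFReal 0 1).real_toNNReal]
  constructor <;> intro h <;>
  · apply h.congr; filter_upwards with x
    simp [NNReal.smul_def, Real.coe_toNNReal _ (gaussianPDFReal_nonneg 0 1 x)]

-- integrability of pieces
lemma int_exp : Integrable (fun x : ℝ => Real.exp (-(1/2) * x^2)) := by
  simpa using integrable_exp_neg_mul_sq (by norm_num : (0:ℝ) < 1/2)

lemma int_mul_exp : Integrable (fun x : ℝ => x * Real.exp (-(1/2) * x^2)) := by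
  simpa using integrable_mul_exp_neg_mul_sq (by norm_num : (0:ℝ) < 1/2)

lemma int_sq_exp : Integrable (fun x : ℝ => x^2 * Real.exp (-(1/2) * x^2)) := by
  have h := integrable_rpow_mul_exp_neg_mul_sq (by norm_num : (0:ℝ) < 1/2)
    (by norm_num : (-1:ℝ) < 2)
  have e : ∀ x : ℝ, x ^ (2:ℝ) = x ^ 2 := fun x => by
    rw [show (2:ℝ) = ((2:ℕ):ℝ) by norm_num, Real.rpow_natCast]
  apply h.congr
  filter_upwards with x
  rw [e]

lemma integral_sq_exp : ∫ x : ℝ, x^2 * Real.exp (-(1/2) * x^2) = Real.sqrt (2*Real.pi) := by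
  have hu : ∀ x : ℝ, HasDerivAt (fun y : ℝ => y) 1 x := fun x => hasDerivAt_id x
  have hv : ∀ x : ℝ, HasDerivAt (fun y : ℝ => -Real.exp (-(1/2) * y^2))
      (x * Real.exp (-(1/2) * x^2)) x := by
    intro x
    have h1 : HasDerivAt (fun y : ℝ => -(1/2) * y^2) (-(1/2) * (2*x)) x := by
      simpa using (hasDerivAt_pow 2 x).const_mul (-(1/2):ℝ)
    have h2 := (h1.exp).fun_neg
    exact h2.congr_deriv (by ring)
  have huv' : Integrable (fun x : ℝ => x * (x * Real.exp (-(1/2) * x^2))) :=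
    int_sq_exp.congr (Filter.Eventually.of_forall fun x => by ring)
  have hu'v : Integrable (fun x : ℝ => (1:ℝ) * (-Real.exp (-(1/2) * x^2))) :=
    int_exp.neg.congr (Filter.Eventually.of_forall fun x => by simp only [Pi.neg_apply]; ring)
  have huv : Integrable (fun x : ℝ => x * (-Real.exp (-(1/2) * x^2))) :=
    int_mul_exp.neg.congr (Filter.Eventually.of_forall fun x => by simp only [Pi.neg_apply]; ring)
  have key := integral_mul_deriv_eq_deriv_mul_of_integrable (fun x _ => hu x) (fun x _ => hv x) huv' hu'v huv
  -- key : ∫ x, x * (x * exp ..) = - ∫ x, 1 * (- exp ..)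
  have h3 : ∫ x : ℝ, x * (x * Real.exp (-(1/2) * x^2)) = ∫ x : ℝ, x^2 * Real.exp (-(1/2) * x^2) := by
    congr 1; funext x; ring
  have h4 : (∫ x : ℝ, (1:ℝ) * (-Real.exp (-(1/2) * x^2))) = - ∫ x : ℝ, Real.exp (-(1/2) * x^2) := by
    rw [← integral_neg]; congr 1; funext x; ring
  rw [h3] at key
  rw [key, h4, neg_neg]
  have := integral_gaussian (1/2 : ℝ)
  simp only [neg_mul] at this ⊢
  rw [this]
  rw [show Real.pi/(1/2) = 2*Real.pi by ring]

lemma sqrt2pi_pos : 0 < Real.sqrt (2*Real.pi) :=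
  Real.sqrt_pos.mpr (by positivity)

lemma integral_comp_neg' (g : ℝ → ℝ) : ∫ x : ℝ, g (-x) = ∫ x : ℝ, g x := by
  have A : MeasurePreserving (fun x : ℝ => -x) volume volume :=
    ⟨measurable_neg, Measure.map_neg_eq_self _⟩
  exact A.integral_comp (Homeomorph.neg ℝ).measurableEmbedding g

lemma integrable_id_gamma : Integrable (fun x : ℝ => x) γ := by
  rw [integrable_gamma_iff]
  exact (int_mul_exp.const_mul ((Real.sqrt (2*Real.pi))⁻¹)).congr
    (Filter.Eventually.of_forall fun x => by simp only []; rw [phi_def]; ring)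

lemma integrable_sq_gamma : Integrable (fun x : ℝ => x^2) γ := by
  rw [integrable_gamma_iff]
  exact (int_sq_exp.const_mul ((Real.sqrt (2*Real.pi))⁻¹)).congr
    (Filter.Eventually.of_forall fun x => by simp only []; rw [phi_def]; ring)

lemma integrable_mul_self_gamma : Integrable (fun x : ℝ => x * x) γ :=
  integrable_sq_gamma.congr (Filter.Eventually.of_forall fun x => by ring)

lemma integrable_abs_gamma : Integrable (fun x : ℝ => |x|) γ :=
  integrable_id_gamma.abs

lemma integral_id_gamma : ∫ x, x ∂γ = 0 := by
  rw [integral_gamma]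
  have h1 : ∫ x : ℝ, gaussianPDFReal 0 1 x * x = - ∫ x : ℝ, gaussianPDFReal 0 1 x * x := by
    conv_lhs => rw [← integral_comp_neg' (fun x => gaussianPDFReal 0 1 x * x)]
    rw [← integral_neg]
    congr 1; funext x
    simp only [phi_def, neg_sq, neg_neg]
    ring
  linarith

lemma integral_sq_gamma : ∫ x, x^2 ∂γ = 1 := by
  rw [integral_gamma]
  have h1 : (fun x => gaussianPDFReal 0 1 x * x^2)
      = fun x => (Real.sqrt (2*Real.pi))⁻¹ * (x^2 * Real.exp (-(1/2) * x^2)) :=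
    funext fun x => by rw [phi_def]; ring
  rw [h1, integral_const_mul, integral_sq_exp, inv_mul_cancel₀ (ne_of_gt sqrt2pi_pos)]

lemma integral_mul_self_gamma : ∫ x, x * x ∂γ = 1 := by
  rw [← integral_sq_gamma]; congr 1; funext x; ring

noncomputable def μpi (n : ℕ) : Measure (Fin n → ℝ) := Measure.pi fun _ => γ

instance (n : ℕ) : IsProbabilityMeasure (μpi n) := by unfold μpi; infer_instance

lemma pi_integral_prod {n : ℕ} (f : Fin n → ℝ → ℝ) :
    ∫ x : Fin n → ℝ, ∏ i, f i (x i) ∂(μpi n) = ∏ i, ∫ x, f i x ∂γ := by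
  letI : MeasureSpace ℝ := ⟨γ⟩
  haveI : SigmaFinite (volume : Measure ℝ) := inferInstanceAs (SigmaFinite γ)
  exact MeasureTheory.integral_fintype_prod_eq_prod f

lemma pi_integrable_prod {n : ℕ} (f : Fin n → ℝ → ℝ) (hf : ∀ i, Integrable (f i) γ) :
    Integrable (fun x : Fin n → ℝ => ∏ i, f i (x i)) (μpi n) := by
  letI : MeasureSpace ℝ := ⟨γ⟩
  haveI : SigmaFinite (volume : Measure ℝ) := inferInstanceAs (SigmaFinite γ)
  exact MeasureTheory.Integrable.fintype_prod hf

lemma pi_integrable_eval {n : ℕ} (j : Fin n) :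
    Integrable (fun x : Fin n → ℝ => x j) (μpi n) := by
  have h := pi_integrable_prod (n := n) (fun i t => if i = j then t else 1) (fun i => by
    rcases eq_or_ne i j with h1 | h1
    · subst h1; simp only [if_pos rfl]; exact integrable_id_gamma
    · simp only [if_neg h1]; exact integrable_const 1)
  apply h.congr
  filter_upwards with x
  simp

lemma pi_integral_eval {n : ℕ} (j : Fin n) : ∫ x : Fin n → ℝ, x j ∂(μpi n) = 0 := by
  have h : ∫ x : Fin n → ℝ, x j ∂(μpi n)
      = ∫ x : Fin n → ℝ, ∏ i, (fun i t => if i = j then t else 1) i (x i) ∂(μpi n) := by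
    congr 1; funext x; simp
  refine h.trans ((pi_integral_prod (fun i t => if i = j then t else 1)).trans ?_)
  refine Finset.prod_eq_zero (Finset.mem_univ j) ?_
  simpa using integral_id_gamma

lemma pi_integrable_eval_mul {n : ℕ} (j k : Fin n) :
    Integrable (fun x : Fin n → ℝ => x j * x k) (μpi n) := by
  have h := pi_integrable_prod (n := n)
    (fun i t => (if i = j then t else 1) * (if i = k then t else 1)) (fun i => by
      rcases eq_or_ne i j with h1 | h1
      · subst h1
        rcases eq_or_ne i k with h2 | h2
        · subst h2; simp only [if_pos rfl]; exact integrable_mul_self_gamma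
        · simp only [if_pos rfl, if_neg h2, mul_one]; exact integrable_id_gamma
      · rcases eq_or_ne i k with h2 | h2
        · subst h2; simp only [if_neg h1, if_pos rfl, one_mul]; exact integrable_id_gamma
        · simp only [if_neg h1, if_neg h2, mul_one]; exact integrable_const 1)
  apply h.congr
  filter_upwards with x
  simp only [Finset.prod_mul_distrib]
  simp

lemma pi_integral_eval_mul {n : ℕ} (j k : Fin n) :
    ∫ x : Fin n → ℝ, x j * x k ∂(μpi n) = if j = k then 1 else 0 := by
  have h : ∫ x : Fin n → ℝ, x j * x k ∂(μpi n)
      = ∫ x : Fin n → ℝ,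
          ∏ i, (fun i t => (if i = j then t else 1) * (if i = k then t else 1)) i (x i)
          ∂(μpi n) := by
    congr 1; funext x
    simp only [Finset.prod_mul_distrib]
    simp
  refine h.trans ((pi_integral_prod
    (fun i t => (if i = j then t else 1) * (if i = k then t else 1))).trans ?_)
  by_cases hjk : j = k
  · subst hjk
    rw [if_pos rfl]
    refine Finset.prod_eq_one fun i _ => ?_
    rcases eq_or_ne i j with h1 | h1
    · subst h1; simpa using integral_mul_self_gamma
    · simp [h1]
  · rw [if_neg hjk]
    refine Finset.prod_eq_zero (Finset.mem_univ j) ?_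
    simpa [hjk] using integral_id_gamma

lemma pi_integrable_abs_eval {n : ℕ} (j : Fin n) :
    Integrable (fun x : Fin n → ℝ => |x j|) (μpi n) := (pi_integrable_eval j).abs

lemma pi_integrable_linear {n : ℕ} (a : Fin n → ℝ) :
    Integrable (fun x : Fin n → ℝ => ∑ j, a j * x j) (μpi n) :=
  integrable_finset_sum _ (fun j _ => (pi_integrable_eval j).const_mul (a j))

lemma pi_integral_linear {n : ℕ} (a : Fin n → ℝ) :
    ∫ x : Fin n → ℝ, ∑ j, a j * x j ∂(μpi n) = 0 := by
  rw [integral_finset_sum _ (fun j _ => (pi_integrable_eval j).const_mul (a j))]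
  simp [integral_const_mul, pi_integral_eval]

lemma pi_sq_expand {n : ℕ} (a : Fin n → ℝ) (x : Fin n → ℝ) :
    (∑ j, a j * x j)^2 = ∑ j, ∑ k, (a j * a k) * (x j * x k) := by
  rw [sq, Finset.sum_mul_sum]
  exact Finset.sum_congr rfl fun j _ => Finset.sum_congr rfl fun k _ => by ring

lemma pi_integrable_quad {n : ℕ} (a : Fin n → ℝ) :
    Integrable (fun x : Fin n → ℝ => (∑ j, a j * x j)^2) (μpi n) := by
  have h : Integrable (fun x : Fin n → ℝ => ∑ j, ∑ k, (a j * a k) * (x j * x k)) (μpi n) :=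
    integrable_finset_sum _ (fun j _ => integrable_finset_sum _
      (fun k _ => (pi_integrable_eval_mul j k).const_mul _))
  exact h.congr (Filter.Eventually.of_forall fun x => (pi_sq_expand a x).symm)

lemma pi_integral_quad {n : ℕ} (a : Fin n → ℝ) :
    ∫ x : Fin n → ℝ, (∑ j, a j * x j)^2 ∂(μpi n) = ∑ j, (a j)^2 := by
  simp_rw [pi_sq_expand]
  rw [integral_finset_sum _ (fun j _ => integrable_finset_sum _
      (fun k _ => (pi_integrable_eval_mul j k).const_mul _))]
  have h : ∀ j : Fin n, ∫ x : Fin n → ℝ, ∑ k, (a j * a k) * (x j * x k) ∂(μpi n) = (a j)^2 := by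
    intro j
    rw [integral_finset_sum _ (fun k _ => (pi_integrable_eval_mul j k).const_mul _)]
    simp_rw [integral_const_mul, pi_integral_eval_mul]
    simp [sq]
  simp_rw [h]

-- transfer section
lemma std_eq (n : ℕ) : stdGaussian n
    = (μpi n).map (MeasurableEquiv.toLp 2 (Fin n → ℝ)) := rfl

instance (n : ℕ) : IsProbabilityMeasure (stdGaussian n) := by
  rw [std_eq]
  exact Measure.isProbabilityMeasure_map (MeasurableEquiv.measurable _).aemeasurable

lemma std_integral {n : ℕ} (g : EuclideanSpace ℝ (Fin n) → ℝ) :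
    ∫ y, g y ∂stdGaussian n
      = ∫ x : Fin n → ℝ, g (MeasurableEquiv.toLp 2 (Fin n → ℝ) x) ∂(μpi n) := by
  rw [std_eq]; exact integral_map_equiv _ _

lemma std_integrable_iff {n : ℕ} (g : EuclideanSpace ℝ (Fin n) → ℝ) :
    Integrable g (stdGaussian n)
      ↔ Integrable (fun x : Fin n → ℝ =>
          g (MeasurableEquiv.toLp 2 (Fin n → ℝ) x)) (μpi n) := by
  rw [std_eq]; exact integrable_map_equiv _ _

-- coordinates of the equiv are the identity
example {n : ℕ} (x : Fin n → ℝ) (i : Fin n) :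
    (MeasurableEquiv.toLp 2 (Fin n → ℝ) x) i = x i := rfl

-- Euclidean moments
lemma e_integrable_eval {n : ℕ} (j : Fin n) :
    Integrable (fun y : EuclideanSpace ℝ (Fin n) => y j) (stdGaussian n) :=
  (std_integrable_iff _).mpr (pi_integrable_eval j)

lemma e_integral_eval {n : ℕ} (j : Fin n) :
    ∫ y : EuclideanSpace ℝ (Fin n), y j ∂(stdGaussian n) = 0 :=
  (std_integral _).trans (pi_integral_eval j)

lemma e_integrable_abs_eval {n : ℕ} (j : Fin n) :
    Integrable (fun y : EuclideanSpace ℝ (Fin n) => |y j|) (stdGaussian n) :=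
  (std_integrable_iff _).mpr (pi_integrable_abs_eval j)

lemma e_integrable_sq_eval {n : ℕ} (j : Fin n) :
    Integrable (fun y : EuclideanSpace ℝ (Fin n) => (y j)^2) (stdGaussian n) :=
  (std_integrable_iff _).mpr ((pi_integrable_eval_mul j j).congr
    (Filter.Eventually.of_forall fun x => (pow_two (x j)).symm))

lemma e_integrable_linear {n : ℕ} (a : Fin n → ℝ) :
    Integrable (fun y : EuclideanSpace ℝ (Fin n) => ∑ j, a j * y j) (stdGaussian n) :=
  (std_integrable_iff _).mpr (pi_integrable_linear a)

lemma e_integral_linear {n : ℕ} (a : Fin n → ℝ) :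
    ∫ y : EuclideanSpace ℝ (Fin n), ∑ j, a j * y j ∂(stdGaussian n) = 0 :=
  (std_integral _).trans (pi_integral_linear a)

lemma e_integrable_quad {n : ℕ} (a : Fin n → ℝ) :
    Integrable (fun y : EuclideanSpace ℝ (Fin n) => (∑ j, a j * y j)^2) (stdGaussian n) :=
  (std_integrable_iff _).mpr (pi_integrable_quad a)

lemma e_integral_quad {n : ℕ} (a : Fin n → ℝ) :
    ∫ y : EuclideanSpace ℝ (Fin n), (∑ j, a j * y j)^2 ∂(stdGaussian n) = ∑ j, (a j)^2 :=
  (std_integral _).trans (pi_integral_quad a)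

-- norm lemmas
lemma e_norm_eq {n : ℕ} (y : EuclideanSpace ℝ (Fin n)) :
    ‖y‖ = Real.sqrt (∑ i, (y i)^2) := by
  rw [EuclideanSpace.norm_eq]
  congr 1
  exact Finset.sum_congr rfl fun i _ => by rw [Real.norm_eq_abs, sq_abs]

lemma e_norm_sq {n : ℕ} (y : EuclideanSpace ℝ (Fin n)) :
    ‖y‖^2 = ∑ i, (y i)^2 := by
  rw [e_norm_eq, Real.sq_sqrt]
  positivity

lemma e_norm_le_sum {n : ℕ} (y : EuclideanSpace ℝ (Fin n)) :
    ‖y‖ ≤ ∑ i, |y i| := by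
  rw [e_norm_eq]
  have h1 : ∑ i, (y i)^2 ≤ (∑ i, |y i|)^2 := by
    calc ∑ i, (y i)^2 = ∑ i, |y i| * |y i| := by
          exact Finset.sum_congr rfl fun i _ => by rw [← sq_abs, sq]
      _ ≤ ∑ i, |y i| * (∑ j, |y j|) := Finset.sum_le_sum fun i _ =>
          mul_le_mul_of_nonneg_left
            (Finset.single_le_sum (f := fun j => |y j|) (fun j _ => abs_nonneg _)
              (Finset.mem_univ i)) (abs_nonneg _)
      _ = (∑ i, |y i|)^2 := by rw [← Finset.sum_mul]; ring
  calc Real.sqrt (∑ i, (y i)^2) ≤ Real.sqrt ((∑ i, |y i|)^2) := Real.sqrt_le_sqrt h1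
    _ = ∑ i, |y i| := Real.sqrt_sq (Finset.sum_nonneg fun i _ => abs_nonneg _)

lemma e_integrable_norm {n : ℕ} :
    Integrable (fun y : EuclideanSpace ℝ (Fin n) => ‖y‖) (stdGaussian n) := by
  refine Integrable.mono' (g := fun y : EuclideanSpace ℝ (Fin n) => ∑ i, |y i|)
    (integrable_finset_sum _ fun j _ => e_integrable_abs_eval j)
    continuous_norm.aestronglyMeasurable ?_
  filter_upwards with y
  rw [norm_norm]
  exact e_norm_le_sum y

lemma e_integrable_norm_sq {n : ℕ} :
    Integrable (fun y : EuclideanSpace ℝ (Fin n) => ‖y‖^2) (stdGaussian n) := by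
  have h : Integrable (fun y : EuclideanSpace ℝ (Fin n) => ∑ i, (y i)^2) (stdGaussian n) :=
    integrable_finset_sum _ fun j _ => e_integrable_sq_eval j
  exact h.congr (Filter.Eventually.of_forall fun y => (e_norm_sq y).symm)

-- decomposition
lemma e_decomp {n : ℕ} (v : EuclideanSpace ℝ (Fin n)) :
    v = ∑ j, v j • EuclideanSpace.single j (1:ℝ) := by
  have h := (EuclideanSpace.basisFun (Fin n) ℝ).sum_repr v
  simp only [EuclideanSpace.basisFun_repr, EuclideanSpace.basisFun_apply] at h
  exact h.symm

lemma clm_coord {n : ℕ} (L : EuclideanSpace ℝ (Fin n) →L[ℝ] EuclideanSpace ℝ (Fin n))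
    (v : EuclideanSpace ℝ (Fin n)) (i : Fin n) :
    L v i = ∑ j, L (EuclideanSpace.single j (1:ℝ)) i * v j := by
  have hT : L v i = ((EuclideanSpace.proj (𝕜 := ℝ) i).comp L) v := rfl
  rw [hT]
  conv_lhs => rw [e_decomp v]
  rw [map_sum]
  refine Finset.sum_congr rfl fun j _ => ?_
  rw [_root_.map_smul]
  rw [smul_eq_mul, mul_comm]
  rfl

lemma integrable_affine {n : ℕ} (g : EuclideanSpace ℝ (Fin n) → ℝ) (hg : Continuous g)
    (b0 b1 : ℝ) (hb1 : 0 ≤ b1) (hgb : ∀ v, |g v| ≤ b0 + b1 * ‖v‖)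
    (a : EuclideanSpace ℝ (Fin n)) (L : EuclideanSpace ℝ (Fin n) →L[ℝ] EuclideanSpace ℝ (Fin n)) :
    Integrable (fun z => g (a + L z)) (stdGaussian n) := by
  refine Integrable.mono' (g := fun z : EuclideanSpace ℝ (Fin n) => (b0 + b1*‖a‖) + (b1*‖L‖) * ‖z‖)
    ((integrable_const _).add (e_integrable_norm.const_mul _))
    (hg.comp (continuous_const.add L.continuous)).aestronglyMeasurable ?_
  filter_upwards with z
  rw [Real.norm_eq_abs]
  calc |g (a + L z)| ≤ b0 + b1 * ‖a + L z‖ := hgb _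
    _ ≤ b0 + b1 * (‖a‖ + ‖L‖*‖z‖) := by
        have h1 := norm_add_le a (L z)
        have h2 := L.le_opNorm z
        nlinarith
    _ = (b0 + b1*‖a‖) + (b1*‖L‖) * ‖z‖ := by ring


/-- `∫ |A_E f − A_{E'} f| dγ_n ≤ √2 · c · ‖Π_E − Π_{E'}‖_F` for
`c`-Lipschitz `f`. -/
theorem distance_between_averages {n : ℕ} (c : ℝ)
    (E E' : Submodule ℝ (EuclideanSpace ℝ (Fin n)))
    (f : EuclideanSpace ℝ (Fin n) → ℝ) (hf : LipschitzC c f) :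
    ∫ x, |avg E f x - avg E' f x| ∂(stdGaussian n)
      ≤ Real.sqrt 2 * c * frobNorm (projMatrix E - projMatrix E') := by
  
  classical
  rcases Nat.eq_zero_or_pos n with hn | hn
  · subst hn
    haveI : Subsingleton (EuclideanSpace ℝ (Fin 0)) := ⟨fun a b => by ext i; exact i.elim0⟩
    have hA : ∀ x, avg E f x - avg E' f x = 0 := by
      intro x
      unfold avg
      rw [sub_eq_zero]
      congr 1
      funext z
      congr 1
      exact Subsingleton.elim _ _
    have h0 : ∫ x, |avg E f x - avg E' f x| ∂(stdGaussian 0) = 0 := by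
      simp [hA]
    have hfr : frobNorm (projMatrix E - projMatrix E') = 0 := by
      unfold frobNorm
      simp
    rw [h0, hfr, mul_zero]
  -- main case
  have hc : 0 ≤ c := by
    have i0 : Fin n := ⟨0, hn⟩
    have h := hf (EuclideanSpace.single i0 (1:ℝ)) 0
    rw [sub_zero, EuclideanSpace.norm_single, norm_one, mul_one] at h
    exact le_trans (abs_nonneg _) h
  have hflip : LipschitzWith c.toNNReal f := by
    apply LipschitzWith.of_dist_le_mul
    intro x y
    rw [Real.dist_eq, dist_eq_norm, Real.coe_toNNReal c hc]
    exact hf x y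
  have hfc : Continuous f := hflip.continuous
  set P : EuclideanSpace ℝ (Fin n) →L[ℝ] EuclideanSpace ℝ (Fin n) :=
    (E.subtypeL.comp (E.orthogonalProjectionOnto)) - (E'.subtypeL.comp (E'.orthogonalProjectionOnto))
    with hPdef
  have hP : ∀ v, P v = proj E v - proj E' v := fun v => rfl
  set Mij : Fin n → Fin n → ℝ := fun i j => P (EuclideanSpace.single j (1:ℝ)) i with hMdef
  have hM : ∀ i j, (projMatrix E - projMatrix E') i j = Mij i j := fun i j => rfl
  set S2 : ℝ := ∑ i, ∑ j, (Mij i j)^2 with hS2def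
  have hS2nonneg : 0 ≤ S2 := Finset.sum_nonneg fun i _ => Finset.sum_nonneg fun j _ => sq_nonneg _
  have hF : frobNorm (projMatrix E - projMatrix E') = Real.sqrt S2 := rfl
  -- pointwise difference identity
  have hdiff : ∀ x z : EuclideanSpace ℝ (Fin n),
      (proj E x + proj Eᗮ z) - (proj E' x + proj E'ᗮ z) = P x - P z := by
    intro x z
    have h1 : (proj E z : EuclideanSpace ℝ (Fin n)) + proj Eᗮ z = z :=
      E.starProjection_add_starProjection_orthogonal z
    have h2 : (proj E' z : EuclideanSpace ℝ (Fin n)) + proj E'ᗮ z = z :=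
      E'.starProjection_add_starProjection_orthogonal z
    have h1' : proj Eᗮ z = z - proj E z := eq_sub_of_add_eq' h1
    have h2' : proj E'ᗮ z = z - proj E' z := eq_sub_of_add_eq' h2
    rw [hP x, hP z, h1', h2']
    abel
  have hb : ∀ x z : EuclideanSpace ℝ (Fin n),
      |f (proj E x + proj Eᗮ z) - f (proj E' x + proj E'ᗮ z)| ≤ c * ‖P x - P z‖ := by
    intro x z
    have h := hf (proj E x + proj Eᗮ z) (proj E' x + proj E'ᗮ z)
    rwa [hdiff x z] at h
  have hfbound : ∀ v : EuclideanSpace ℝ (Fin n), |f v| ≤ |f 0| + c * ‖v‖ := by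
    intro v
    have h := hf v 0
    rw [sub_zero] at h
    calc |f v| = |(f v - f 0) + f 0| := by ring_nf
      _ ≤ |f v - f 0| + |f 0| := abs_add_le _ _
      _ ≤ c * ‖v‖ + |f 0| := by linarith
      _ = |f 0| + c * ‖v‖ := by ring
  have hLE : ∀ (G : Submodule ℝ (EuclideanSpace ℝ (Fin n))) (x : EuclideanSpace ℝ (Fin n)),
      Integrable (fun z => f (proj G x + proj Gᗮ z)) (stdGaussian n) := by
    intro G x
    exact integrable_affine f hfc (|f 0|) c hc hfbound (proj G x)
      ((Gᗮ).subtypeL.comp (Gᗮ.orthogonalProjectionOnto))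
  have hnormint : ∀ x : EuclideanSpace ℝ (Fin n),
      Integrable (fun z => ‖P x - P z‖) (stdGaussian n) := by
    intro x
    have h := integrable_affine (fun v => ‖v‖) continuous_norm 0 1 zero_le_one
      (fun v => by simp) (P x) (-P)
    apply h.congr
    filter_upwards with z
    simp [sub_eq_add_neg]
  have hpt : ∀ x, |avg E f x - avg E' f x| ≤ ∫ z, c * ‖P x - P z‖ ∂(stdGaussian n) := by
    intro x
    have h1 := hLE E x
    have h2 := hLE E' x
    have hsub : avg E f x - avg E' f x
        = ∫ z, (f (proj E x + proj Eᗮ z) - f (proj E' x + proj E'ᗮ z)) ∂(stdGaussian n) :=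
      (integral_sub h1 h2).symm
    rw [hsub]
    calc |∫ z, (f (proj E x + proj Eᗮ z) - f (proj E' x + proj E'ᗮ z)) ∂(stdGaussian n)|
        ≤ ∫ z, |f (proj E x + proj Eᗮ z) - f (proj E' x + proj E'ᗮ z)| ∂(stdGaussian n) := by
          simpa [Real.norm_eq_abs] using
            norm_integral_le_integral_norm (μ := stdGaussian n)
              (f := fun z => f (proj E x + proj Eᗮ z) - f (proj E' x + proj E'ᗮ z))
      _ ≤ ∫ z, c * ‖P x - P z‖ ∂(stdGaussian n) :=
          integral_mono (h1.sub h2).abs ((hnormint x).const_mul c) (fun z => hb x z)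
  -- product measure
  set Λ : Measure (EuclideanSpace ℝ (Fin n) × EuclideanSpace ℝ (Fin n)) :=
    (stdGaussian n).prod (stdGaussian n) with hΛdef
  haveI : IsProbabilityMeasure Λ := by rw [hΛdef]; infer_instance
  set h2fun : EuclideanSpace ℝ (Fin n) × EuclideanSpace ℝ (Fin n) → ℝ :=
    fun p => ‖P p.1 - P p.2‖ with h2def
  have hPn : Integrable (fun z => ‖P z‖) (stdGaussian n) := by
    apply (hnormint 0).congr
    filter_upwards with z
    rw [map_zero, zero_sub, norm_neg]
  have hfst : Integrable (fun p : EuclideanSpace ℝ (Fin n) × EuclideanSpace ℝ (Fin n) => ‖P p.1‖) Λ := by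
    have h := hPn.mul_prod (integrable_const (1:ℝ) (μ := stdGaussian n))
    simpa using h
  have hsnd : Integrable (fun p : EuclideanSpace ℝ (Fin n) × EuclideanSpace ℝ (Fin n) => ‖P p.2‖) Λ := by
    have h := (integrable_const (1:ℝ) (μ := stdGaussian n)).mul_prod hPn
    simpa using h
  have hcont2 : Continuous h2fun :=
    ((P.continuous.comp continuous_fst).sub (P.continuous.comp continuous_snd)).norm
  have hint2 : Integrable h2fun Λ := by
    refine Integrable.mono' (hfst.add hsnd) hcont2.aestronglyMeasurable ?_
    filter_upwards with p
    rw [norm_norm]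
    exact norm_sub_le _ _
  -- expansion of the square
  have hsq_expand : ∀ p : EuclideanSpace ℝ (Fin n) × EuclideanSpace ℝ (Fin n),
      h2fun p ^ 2 = ∑ i, ((∑ j, Mij i j * p.1 j)^2
        - 2*((∑ j, Mij i j * p.1 j) * (∑ j, Mij i j * p.2 j)) + (∑ j, Mij i j * p.2 j)^2) := by
    intro p
    rw [h2def]
    simp only []
    rw [e_norm_sq]
    refine Finset.sum_congr rfl fun i _ => ?_
    have hco : (P p.1 - P p.2) i = (∑ j, Mij i j * p.1 j) - (∑ j, Mij i j * p.2 j) := by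
      have : (P p.1 - P p.2) i = P p.1 i - P p.2 i := rfl
      rw [this, clm_coord P p.1 i, clm_coord P p.2 i]
    rw [hco]
    ring
  have hquad1 : ∀ i, Integrable
      (fun p : EuclideanSpace ℝ (Fin n) × EuclideanSpace ℝ (Fin n) => (∑ j, Mij i j * p.1 j)^2) Λ := by
    intro i
    have h := (e_integrable_quad (Mij i)).mul_prod (integrable_const (1:ℝ) (μ := stdGaussian n))
    simpa using h
  have hquad2 : ∀ i, Integrable
      (fun p : EuclideanSpace ℝ (Fin n) × EuclideanSpace ℝ (Fin n) => (∑ j, Mij i j * p.2 j)^2) Λ := by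
    intro i
    have h := (integrable_const (1:ℝ) (μ := stdGaussian n)).mul_prod (e_integrable_quad (Mij i))
    simpa using h
  have hcrossint : ∀ i, Integrable
      (fun p : EuclideanSpace ℝ (Fin n) × EuclideanSpace ℝ (Fin n) =>
        (∑ j, Mij i j * p.1 j) * (∑ j, Mij i j * p.2 j)) Λ :=
    fun i => (e_integrable_linear (Mij i)).mul_prod (e_integrable_linear (Mij i))
  have hterm_int : ∀ i, Integrable
      (fun p : EuclideanSpace ℝ (Fin n) × EuclideanSpace ℝ (Fin n) =>
        (∑ j, Mij i j * p.1 j)^2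
        - 2*((∑ j, Mij i j * p.1 j) * (∑ j, Mij i j * p.2 j)) + (∑ j, Mij i j * p.2 j)^2) Λ :=
    fun i => ((hquad1 i).sub ((hcrossint i).const_mul 2)).add (hquad2 i)
  have hval1 : ∀ i, ∫ p, (∑ j, Mij i j * p.1 j)^2 ∂Λ = ∑ j, (Mij i j)^2 := by
    intro i
    have h := integral_prod_mul (μ := stdGaussian n) (ν := stdGaussian n)
      (fun y => (∑ j, Mij i j * y j)^2) (fun _ => (1:ℝ))
    simpa [e_integral_quad] using h
  have hval2 : ∀ i, ∫ p, (∑ j, Mij i j * p.2 j)^2 ∂Λ = ∑ j, (Mij i j)^2 := by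
    intro i
    have h := integral_prod_mul (μ := stdGaussian n) (ν := stdGaussian n)
      (fun _ => (1:ℝ)) (fun y => (∑ j, Mij i j * y j)^2)
    simpa [e_integral_quad] using h
  have hvalc : ∀ i, ∫ p, (∑ j, Mij i j * p.1 j) * (∑ j, Mij i j * p.2 j) ∂Λ = 0 := by
    intro i
    have h := integral_prod_mul (μ := stdGaussian n) (ν := stdGaussian n)
      (fun y => (∑ j, Mij i j * y j)) (fun y => (∑ j, Mij i j * y j))
    simpa [e_integral_linear] using h
  have hS : ∫ p, h2fun p ^ 2 ∂Λ = 2 * S2 := by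
    have hcongr : ∫ p, h2fun p ^ 2 ∂Λ = ∫ p, ∑ i, ((∑ j, Mij i j * p.1 j)^2
        - 2*((∑ j, Mij i j * p.1 j) * (∑ j, Mij i j * p.2 j)) + (∑ j, Mij i j * p.2 j)^2) ∂Λ := by
      congr 1
      funext p
      exact hsq_expand p
    rw [hcongr, integral_finset_sum _ (fun i _ => hterm_int i)]
    have hterm_val : ∀ i, ∫ p, ((∑ j, Mij i j * p.1 j)^2
        - 2*((∑ j, Mij i j * p.1 j) * (∑ j, Mij i j * p.2 j))
        + (∑ j, Mij i j * p.2 j)^2) ∂Λ = 2 * ∑ j, (Mij i j)^2 := by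
      intro i
      have hA : Integrable (fun p : EuclideanSpace ℝ (Fin n) × EuclideanSpace ℝ (Fin n) =>
          (∑ j, Mij i j * p.1 j)^2
          - 2*((∑ j, Mij i j * p.1 j) * (∑ j, Mij i j * p.2 j))) Λ :=
        (hquad1 i).sub ((hcrossint i).const_mul 2)
      have hB : Integrable (fun p : EuclideanSpace ℝ (Fin n) × EuclideanSpace ℝ (Fin n) =>
          2*((∑ j, Mij i j * p.1 j) * (∑ j, Mij i j * p.2 j))) Λ :=
        (hcrossint i).const_mul 2
      rw [integral_add hA (hquad2 i), integral_sub (hquad1 i) hB, integral_const_mul,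
        hval1 i, hval2 i, hvalc i]
      ring
    rw [Finset.sum_congr rfl fun i _ => hterm_val i, ← Finset.mul_sum, hS2def]
  have hmem : MemLp h2fun 2 Λ := by
    rw [memLp_two_iff_integrable_sq hcont2.aestronglyMeasurable]
    have h := integrable_finset_sum Finset.univ (fun i (_ : i ∈ Finset.univ) => hterm_int i)
    exact h.congr (Filter.Eventually.of_forall fun p => (hsq_expand p).symm)
  have hCS : ∫ p, h2fun p ∂Λ ≤ Real.sqrt (2 * S2) := by
    have hvar := ProbabilityTheory.variance_nonneg h2fun Λ
    rw [ProbabilityTheory.variance_eq_sub hmem] at hvar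
    have hsq : Λ[h2fun ^ 2] = 2 * S2 := by
      rw [← hS]
      congr 1
    have h1 : (∫ p, h2fun p ∂Λ)^2 ≤ 2 * S2 := by
      rw [← hsq]
      have : Λ[h2fun] = ∫ p, h2fun p ∂Λ := rfl
      linarith [hvar]
    exact Real.le_sqrt_of_sq_le h1
  have hib : Integrable (fun p => c * h2fun p) Λ := hint2.const_mul c
  have houter : ∫ x, (∫ z, c * ‖P x - P z‖ ∂(stdGaussian n)) ∂(stdGaussian n)
      = c * ∫ p, h2fun p ∂Λ := by
    rw [integral_integral hib]
    exact integral_const_mul c _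
  have hmono : ∫ x, |avg E f x - avg E' f x| ∂(stdGaussian n)
      ≤ ∫ x, (∫ z, c * ‖P x - P z‖ ∂(stdGaussian n)) ∂(stdGaussian n) := by
    apply integral_mono_of_nonneg
    · filter_upwards with x; exact abs_nonneg _
    · exact hib.integral_prod_left
    · filter_upwards with x; exact hpt x
  calc ∫ x, |avg E f x - avg E' f x| ∂(stdGaussian n)
      ≤ c * ∫ p, h2fun p ∂Λ := by rw [← houter]; exact hmono
    _ ≤ c * Real.sqrt (2 * S2) := mul_le_mul_of_nonneg_left hCS hc
    _ = Real.sqrt 2 * c * frobNorm (projMatrix E - projMatrix E') := by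
        rw [hF, Real.sqrt_mul (by norm_num : (0:ℝ) ≤ 2)]
        ring
end

section
/- Let A and Ã be real positive semidefinite n×n matrices and let η > 0. Let V be the span of the eigenvectors of A with eigenvalue at least η, and let Π_V be the orthogonal projection onto V. Let A_{≥η}^{-1} denote the η-truncated pseudoinverse of A, and Ã_{≥η/2}^{-1} the (η/2)-truncated pseudoinverse of Ã. Then ‖(A_{≥η}^{-1} − Ã_{≥η/2}^{-1})·Π_V‖₂ ≤ 20·‖A‖_F·√(‖A − Ã‖₂) / η^{5/2}. -/
open MeasureTheory

open Matrix
variable {n : ℕ}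
lemma toPi_dot (a b : EuclideanSpace ℝ (Fin n)) :
    toPi a ⬝ᵥ toPi b = (inner ℝ a b : ℝ) := by
  simp [toPi, dotProduct, PiLp.inner_apply, RCLike.inner_apply, mul_comm]

noncomputable def specM (v : Fin n → EuclideanSpace ℝ (Fin n)) (c : Fin n → ℝ) :
    Matrix (Fin n) (Fin n) ℝ :=
  ∑ i, c i • Matrix.vecMulVec (toPi (v i)) (toPi (v i))

lemma vecMulVec_mul_vecMulVec (a b c d : Fin n → ℝ) :
    vecMulVec a b * vecMulVec c d = (b ⬝ᵥ c) • vecMulVec a d := by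
  ext i j
  simp [Matrix.mul_apply, vecMulVec_apply, dotProduct, Finset.mul_sum, Finset.sum_mul]
  congr 1; ext k; ring

lemma orthonormal_dot {v : Fin n → EuclideanSpace ℝ (Fin n)} (hv : Orthonormal ℝ v) (i j : Fin n) :
    toPi (v i) ⬝ᵥ toPi (v j) = if i = j then (1:ℝ) else 0 := by
  rw [toPi_dot, orthonormal_iff_ite.mp hv]

lemma specM_mul {v : Fin n → EuclideanSpace ℝ (Fin n)} (hv : Orthonormal ℝ v) (c d : Fin n → ℝ) :
    specM v c * specM v d = specM v (fun i => c i * d i) := by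
  rw [specM, specM, Finset.sum_mul_sum]
  rw [specM]
  rw [Finset.sum_congr rfl (fun i _ => rfl)]
  · apply Finset.sum_congr rfl
    intro i _
    rw [Finset.sum_eq_single i]
    · rw [smul_mul_smul_comm, vecMulVec_mul_vecMulVec, orthonormal_dot hv, if_pos rfl, one_smul]
    · intro j _ hji
      rw [smul_mul_smul_comm, vecMulVec_mul_vecMulVec, orthonormal_dot hv, if_neg (Ne.symm hji),
        zero_smul, smul_zero]
    · intro h; exact absurd (Finset.mem_univ i) h

lemma specM_one {v : Fin n → EuclideanSpace ℝ (Fin n)} (hv : Orthonormal ℝ v) :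
    specM v (fun _ => (1:ℝ)) = 1 := by
  classical
  set W : Matrix (Fin n) (Fin n) ℝ := Matrix.of (fun i j => toPi (v i) j) with hW
  have hWWt : W * Wᵀ = 1 := by
    ext i j
    simp only [Matrix.mul_apply, Matrix.transpose_apply, Matrix.one_apply, hW, Matrix.of_apply]
    have := orthonormal_dot hv i j
    simpa [dotProduct] using this
  have hWtW : Wᵀ * W = 1 := mul_eq_one_comm.mp hWWt
  calc specM v (fun _ => (1:ℝ)) = Wᵀ * W := by
        ext j k
        simp [specM, Matrix.sum_apply, vecMulVec_apply, Matrix.mul_apply, hW, mul_comm]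
    _ = 1 := hWtW

lemma specNorm_nonneg (M : Matrix (Fin n) (Fin n) ℝ) : 0 ≤ specNorm M := norm_nonneg _

lemma specNorm_le_of_bound (M : Matrix (Fin n) (Fin n) ℝ) {c : ℝ} (hc : 0 ≤ c)
    (h : ∀ x : EuclideanSpace ℝ (Fin n), ‖(ofPi (M *ᵥ toPi x) : EuclideanSpace ℝ (Fin n))‖ ≤ c * ‖x‖) :
    specNorm M ≤ c :=
  ContinuousLinearMap.opNorm_le_bound _ hc h

lemma norm_mulVec_le (M : Matrix (Fin n) (Fin n) ℝ) (x : EuclideanSpace ℝ (Fin n)) :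
    ‖(ofPi (M *ᵥ toPi x) : EuclideanSpace ℝ (Fin n))‖ ≤ specNorm M * ‖x‖ :=
  (LinearMap.toContinuousLinearMap (Matrix.toEuclideanLin M)).le_opNorm x

lemma specNorm_mul_le (M N : Matrix (Fin n) (Fin n) ℝ) :
    specNorm (M * N) ≤ specNorm M * specNorm N := by
  apply specNorm_le_of_bound _ (mul_nonneg (specNorm_nonneg M) (specNorm_nonneg N))
  intro x
  rw [← Matrix.mulVec_mulVec]
  calc ‖(ofPi (M *ᵥ (N *ᵥ toPi x)) : EuclideanSpace ℝ (Fin n))‖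
      ≤ specNorm M * ‖(ofPi (N *ᵥ toPi x) : EuclideanSpace ℝ (Fin n))‖ := norm_mulVec_le M (ofPi (N *ᵥ toPi x))
    _ ≤ specNorm M * (specNorm N * ‖x‖) := by
        exact mul_le_mul_of_nonneg_left (norm_mulVec_le N x) (specNorm_nonneg M)
    _ = specNorm M * specNorm N * ‖x‖ := by ring

lemma specNorm_add_le (M N : Matrix (Fin n) (Fin n) ℝ) :
    specNorm (M + N) ≤ specNorm M + specNorm N := by
  unfold specNorm
  rw [map_add, map_add]
  exact norm_add_le _ _

lemma specNorm_neg (M : Matrix (Fin n) (Fin n) ℝ) : specNorm (-M) = specNorm M := by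
  unfold specNorm
  rw [map_neg, map_neg, norm_neg]

lemma specNorm_zero : specNorm (0 : Matrix (Fin n) (Fin n) ℝ) = 0 := by
  unfold specNorm
  rw [map_zero, map_zero, norm_zero]

lemma euclid_sum_apply (m : ℕ) (f : Fin m → EuclideanSpace ℝ (Fin n)) (k : Fin n) :
    (∑ i, f i) k = ∑ i, f i k := by
  induction (Finset.univ : Finset (Fin m)) using Finset.induction_on with
  | empty => simp
  | insert _ _ h ih => rw [Finset.sum_insert h, Finset.sum_insert h, PiLp.add_apply, ih]

lemma doubleSum_mulVec (w v : Fin n → EuclideanSpace ℝ (Fin n)) (c : Fin n → Fin n → ℝ)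
    (x : EuclideanSpace ℝ (Fin n)) :
    (ofPi ((∑ i, ∑ j, c i j • vecMulVec (toPi (w i)) (toPi (v j))) *ᵥ toPi x)
      : EuclideanSpace ℝ (Fin n))
      = ∑ i, (∑ j, c i j * (inner ℝ (v j) x : ℝ)) • w i := by
  apply PiLp.ext
  intro k
  rw [euclid_sum_apply]
  show ((∑ i, ∑ j, c i j • vecMulVec (toPi (w i)) (toPi (v j))) *ᵥ toPi x) k
      = ∑ i, ((∑ j, c i j * (inner ℝ (v j) x : ℝ)) • w i) k
  have hR : ∀ i, ((∑ j, c i j * (inner ℝ (v j) x : ℝ)) • w i) k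
      = ∑ j, c i j * (toPi (v j) ⬝ᵥ toPi x) * w i k := by
    intro i
    rw [PiLp.smul_apply, smul_eq_mul, Finset.sum_mul]
    refine Finset.sum_congr rfl fun j _ => ?_
    rw [toPi_dot]
  simp only [hR]
  have hL : ((∑ i, ∑ j, c i j • vecMulVec (toPi (w i)) (toPi (v j))) *ᵥ toPi x) k
      = ∑ l, (∑ i, ∑ j, c i j * (toPi (w i) k * toPi (v j) l)) * toPi x l := by
    simp [Matrix.mulVec, dotProduct, Matrix.sum_apply, vecMulVec_apply]
  rw [hL]
  have e1 : ∀ l, (∑ i, ∑ j, c i j * (toPi (w i) k * toPi (v j) l)) * toPi x l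
      = ∑ i, ∑ j, c i j * (toPi (w i) k * toPi (v j) l) * toPi x l := by
    intro l; rw [Finset.sum_mul]; exact Finset.sum_congr rfl fun i _ => Finset.sum_mul ..
  simp only [e1]
  rw [Finset.sum_comm]
  refine Finset.sum_congr rfl fun i _ => ?_
  have e2 : ∀ j, c i j * (toPi (v j) ⬝ᵥ toPi x) * w i k
      = ∑ l, c i j * (toPi (w i) k * toPi (v j) l) * toPi x l := by
    intro j
    simp only [dotProduct, Finset.mul_sum, Finset.sum_mul, toPi]
    exact Finset.sum_congr rfl fun l _ => by ring
  rw [Finset.sum_comm]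
  exact Finset.sum_congr rfl fun j _ => (e2 j).symm

lemma sq_le_of_sq_le {a b : ℝ} (ha : 0 ≤ a) (hb : 0 ≤ b) (h : a ^ 2 ≤ b ^ 2) : a ≤ b := by
  nlinarith

lemma norm_orthonormal_sum {w : Fin n → EuclideanSpace ℝ (Fin n)} (hw : Orthonormal ℝ w)
    (a : Fin n → ℝ) :
    ‖(∑ i, a i • w i : EuclideanSpace ℝ (Fin n))‖ ^ 2 = ∑ i, a i ^ 2 := by
  have h := hw.inner_sum a a Finset.univ
  rw [← real_inner_self_eq_norm_sq]
  rw [h]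
  refine Finset.sum_congr rfl fun i _ => ?_
  simp [sq]

lemma bessel {w : Fin n → EuclideanSpace ℝ (Fin n)} (hw : Orthonormal ℝ w)
    (x : EuclideanSpace ℝ (Fin n)) :
    ∑ i, (inner ℝ (w i) x : ℝ) ^ 2 ≤ ‖x‖ ^ 2 := by
  have h := hw.sum_inner_products_le (s := Finset.univ) x
  simpa [Real.norm_eq_abs, sq_abs] using h


lemma specNorm_doubleSum_le {w v : Fin n → EuclideanSpace ℝ (Fin n)}
    (hw : Orthonormal ℝ w) (hv : Orthonormal ℝ v) (c : Fin n → Fin n → ℝ) :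
    specNorm (∑ i, ∑ j, c i j • vecMulVec (toPi (w i)) (toPi (v j)))
      ≤ Real.sqrt (∑ i, ∑ j, c i j ^ 2) := by
  apply specNorm_le_of_bound _ (Real.sqrt_nonneg _)
  intro x
  rw [doubleSum_mulVec]
  set S := ∑ i, ∑ j, c i j ^ 2 with hS
  have hS0 : 0 ≤ S := Finset.sum_nonneg fun i _ => Finset.sum_nonneg fun j _ => sq_nonneg _
  apply sq_le_of_sq_le (norm_nonneg _) (mul_nonneg (Real.sqrt_nonneg _) (norm_nonneg _))
  rw [norm_orthonormal_sum hw, mul_pow, Real.sq_sqrt hS0]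
  calc ∑ i, (∑ j, c i j * (inner ℝ (v j) x : ℝ)) ^ 2
      ≤ ∑ i, (∑ j, c i j ^ 2) * (∑ j, (inner ℝ (v j) x : ℝ) ^ 2) := by
        refine Finset.sum_le_sum fun i _ => ?_
        exact Finset.sum_mul_sq_le_sq_mul_sq _ _ _
    _ ≤ ∑ i, (∑ j, c i j ^ 2) * ‖x‖ ^ 2 := by
        refine Finset.sum_le_sum fun i _ => ?_
        exact mul_le_mul_of_nonneg_left (bessel hv x)
          (Finset.sum_nonneg fun j _ => sq_nonneg _)
    _ = S * ‖x‖ ^ 2 := by rw [← Finset.sum_mul]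

lemma specM_eq_doubleSum (v : Fin n → EuclideanSpace ℝ (Fin n)) (c : Fin n → ℝ) :
    specM v c = ∑ i, ∑ j, (if i = j then c i else 0) • vecMulVec (toPi (v i)) (toPi (v j)) := by
  unfold specM
  refine Finset.sum_congr rfl fun i _ => ?_
  rw [Finset.sum_eq_single i]
  · rw [if_pos rfl]
  · intro j _ hji; rw [if_neg (Ne.symm hji), zero_smul]
  · intro h; exact absurd (Finset.mem_univ i) h

lemma specM_mulVec (v : Fin n → EuclideanSpace ℝ (Fin n)) (c : Fin n → ℝ)
    (x : EuclideanSpace ℝ (Fin n)) :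
    (ofPi (specM v c *ᵥ toPi x) : EuclideanSpace ℝ (Fin n))
      = ∑ i, (c i * (inner ℝ (v i) x : ℝ)) • v i := by
  rw [specM_eq_doubleSum, doubleSum_mulVec]
  refine Finset.sum_congr rfl fun i _ => ?_
  congr 1
  rw [Finset.sum_eq_single i]
  · rw [if_pos rfl]
  · intro j _ hji; rw [if_neg (Ne.symm hji), zero_mul]
  · intro h; exact absurd (Finset.mem_univ i) h

lemma specNorm_specM_le {v : Fin n → EuclideanSpace ℝ (Fin n)} (hv : Orthonormal ℝ v)
    (c : Fin n → ℝ) {m : ℝ} (hm : 0 ≤ m) (h : ∀ i, |c i| ≤ m) :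
    specNorm (specM v c) ≤ m := by
  apply specNorm_le_of_bound _ hm
  intro x
  rw [specM_mulVec]
  apply sq_le_of_sq_le (norm_nonneg _) (mul_nonneg hm (norm_nonneg _))
  rw [norm_orthonormal_sum hv, mul_pow]
  calc ∑ i, (c i * (inner ℝ (v i) x : ℝ)) ^ 2
      ≤ ∑ i, m ^ 2 * (inner ℝ (v i) x : ℝ) ^ 2 := by
        refine Finset.sum_le_sum fun i _ => ?_
        rw [mul_pow]
        apply mul_le_mul_of_nonneg_right _ (sq_nonneg _)
        rw [← sq_abs]
        exact pow_le_pow_left₀ (abs_nonneg _) (h i) 2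
    _ = m ^ 2 * ∑ i, (inner ℝ (v i) x : ℝ) ^ 2 := by rw [Finset.mul_sum]
    _ ≤ m ^ 2 * ‖x‖ ^ 2 := mul_le_mul_of_nonneg_left (bessel hv x) (sq_nonneg _)

lemma trace_mul_transpose (M : Matrix (Fin n) (Fin n) ℝ) :
    Matrix.trace (M * Mᵀ) = ∑ j, ∑ k, M j k ^ 2 := by
  simp [Matrix.trace, Matrix.mul_apply, Matrix.diag, sq]

lemma specM_eq_conj (v : Fin n → EuclideanSpace ℝ (Fin n)) (c : Fin n → ℝ) :
    specM v c = (Matrix.of fun i j => toPi (v i) j)ᵀ *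
      (Matrix.diagonal c * Matrix.of fun i j => toPi (v i) j) := by
  ext j k
  simp [specM, Matrix.sum_apply, vecMulVec_apply, Matrix.mul_apply, Matrix.diagonal,
    Finset.mul_sum, Matrix.transpose_apply]
  refine Finset.sum_congr rfl fun i _ => ?_
  ring

lemma frobNorm_sq_specM {v : Fin n → EuclideanSpace ℝ (Fin n)} (hv : Orthonormal ℝ v)
    (c : Fin n → ℝ) :
    frobNorm (specM v c) ^ 2 = ∑ i, c i ^ 2 := by
  classical
  set W : Matrix (Fin n) (Fin n) ℝ := Matrix.of (fun i j => toPi (v i) j) with hWdef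
  have hWWt : W * Wᵀ = 1 := by
    ext i j
    simp only [Matrix.mul_apply, Matrix.transpose_apply, Matrix.one_apply, hWdef, Matrix.of_apply]
    have := orthonormal_dot hv i j
    simpa [dotProduct] using this
  have h1 : frobNorm (specM v c) ^ 2 = Matrix.trace (specM v c * (specM v c)ᵀ) := by
    rw [trace_mul_transpose, frobNorm, Real.sq_sqrt]
    exact Finset.sum_nonneg fun i _ => Finset.sum_nonneg fun j _ => sq_nonneg _
  rw [h1, specM_eq_conj v c]
  have key : (Wᵀ * (Matrix.diagonal c * W)) * (Wᵀ * (Matrix.diagonal c * W))ᵀ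
      = Wᵀ * (Matrix.diagonal (fun i => c i * c i) * W) := by
    rw [Matrix.transpose_mul, Matrix.transpose_mul, Matrix.transpose_transpose,
      Matrix.diagonal_transpose, ← Matrix.diagonal_mul_diagonal]
    calc Wᵀ * (Matrix.diagonal c * W) * (Wᵀ * Matrix.diagonal c * W)
        = Wᵀ * Matrix.diagonal c * (W * Wᵀ) * (Matrix.diagonal c * W) := by
          simp only [Matrix.mul_assoc]
      _ = Wᵀ * (Matrix.diagonal c * Matrix.diagonal c * W) := by
          rw [hWWt, Matrix.mul_one]; simp only [Matrix.mul_assoc]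
  rw [key, ← Matrix.mul_assoc, Matrix.trace_mul_comm, ← Matrix.mul_assoc, hWWt,
    Matrix.one_mul, Matrix.trace_diagonal]
  refine Finset.sum_congr rfl fun i _ => ?_
  rw [sq]


lemma specM_transpose (v : Fin n → EuclideanSpace ℝ (Fin n)) (c : Fin n → ℝ) :
    (specM v c)ᵀ = specM v c := by
  ext j k
  simp only [Matrix.transpose_apply, specM, Matrix.sum_apply, Matrix.smul_apply,
    vecMulVec_apply, smul_eq_mul]
  exact Finset.sum_congr rfl fun i _ => by ring

lemma specM_mulVec_single (v : Fin n → EuclideanSpace ℝ (Fin n)) {hv : Orthonormal ℝ v}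
    (c : Fin n → ℝ) (j : Fin n) :
    specM v c *ᵥ toPi (v j) = c j • toPi (v j) := by
  have h : (ofPi (specM v c *ᵥ toPi (v j)) : EuclideanSpace ℝ (Fin n))
      = ∑ i, (c i * (inner ℝ (v i) (v j) : ℝ)) • v i := specM_mulVec v c (v j)
  have h2 : (∑ i, (c i * (inner ℝ (v i) (v j) : ℝ)) • v i : EuclideanSpace ℝ (Fin n))
      = c j • v j := by
    rw [Finset.sum_eq_single j]
    · rw [orthonormal_iff_ite.mp hv, if_pos rfl, mul_one]
    · intro i _ hij
      rw [orthonormal_iff_ite.mp hv, if_neg hij, mul_zero, zero_smul]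
    · intro h; exact absurd (Finset.mem_univ j) h
  have := h.trans h2
  calc specM v c *ᵥ toPi (v j) = toPi (ofPi (specM v c *ᵥ toPi (v j))) := rfl
    _ = toPi (c j • v j : EuclideanSpace ℝ (Fin n)) := by rw [this]
    _ = c j • toPi (v j) := rfl

lemma eigen_dot {v w : Fin n → EuclideanSpace ℝ (Fin n)} (hv : Orthonormal ℝ v)
    (hw : Orthonormal ℝ w) (lam mu : Fin n → ℝ) (i j : Fin n) :
    toPi (w i) ⬝ᵥ ((specM v lam - specM w mu) *ᵥ toPi (v j))
      = (lam j - mu i) * (inner ℝ (w i) (v j) : ℝ) := by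
  rw [Matrix.sub_mulVec, dotProduct_sub]
  have h1 : specM v lam *ᵥ toPi (v j) = lam j • toPi (v j) :=
    specM_mulVec_single (hv := hv) v lam j
  have h2 : toPi (w i) ⬝ᵥ (specM w mu *ᵥ toPi (v j)) = mu i * (inner ℝ (w i) (v j) : ℝ) := by
    rw [dotProduct_mulVec, ← Matrix.mulVec_transpose, specM_transpose]
    have h3 : specM w mu *ᵥ toPi (w i) = mu i • toPi (w i) :=
      specM_mulVec_single (hv := hw) w mu i
    rw [h3, smul_dotProduct, toPi_dot, smul_eq_mul]
  rw [h1, h2, dotProduct_smul, toPi_dot, smul_eq_mul]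
  ring

lemma specM_mul_specM {v w : Fin n → EuclideanSpace ℝ (Fin n)}
    (p q : Fin n → ℝ) :
    specM w p * specM v q
      = ∑ i, ∑ j, (p i * q j * (inner ℝ (w i) (v j) : ℝ)) •
          vecMulVec (toPi (w i)) (toPi (v j)) := by
  rw [specM, specM, Finset.sum_mul_sum]
  refine Finset.sum_congr rfl fun i _ => Finset.sum_congr rfl fun j _ => ?_
  rw [smul_mul_smul_comm, vecMulVec_mul_vecMulVec, smul_smul, toPi_dot]


lemma num1 {s t fA : ℝ} (hs : 0 < s) (ht0 : 0 ≤ t) (hts : t ≤ s)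
    (hfA0 : 0 ≤ fA) (hfAs : s ^ 2 ≤ fA) :
    2 * t ^ 2 * fA / (s ^ 2) ^ 2 * (s ^ 2)⁻¹ + 2 / s ^ 2 * t ^ 2 * (s ^ 2)⁻¹
      ≤ 20 * fA * t / s ^ 5 := by
  have hsne : s ≠ 0 := ne_of_gt hs
  have key : 2 * t ^ 2 * fA + 2 * t ^ 2 * s ^ 2 ≤ 20 * fA * t * s := by
    nlinarith [mul_nonneg (mul_nonneg (sub_nonneg.mpr hts) ht0) hfA0,
      mul_nonneg (mul_nonneg (sub_nonneg.mpr hts) ht0) (mul_nonneg hs.le hs.le),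
      mul_nonneg (mul_nonneg (sub_nonneg.mpr hfAs) ht0) hs.le,
      mul_nonneg (mul_nonneg ht0 hs.le) hfA0]
  calc 2 * t ^ 2 * fA / (s ^ 2) ^ 2 * (s ^ 2)⁻¹ + 2 / s ^ 2 * t ^ 2 * (s ^ 2)⁻¹
      = (2 * t ^ 2 * fA + 2 * t ^ 2 * s ^ 2) / s ^ 6 := by field_simp
    _ ≤ (20 * fA * t * s) / s ^ 6 := by gcongr
    _ = 20 * fA * t / s ^ 5 := by field_simp

lemma num2 {s t fA : ℝ} (hs : 0 < s) (ht0 : 0 ≤ t) (hst : s ≤ t)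
    (hfA0 : 0 ≤ fA) (hfAs : s ^ 2 ≤ fA) :
    ((s ^ 2)⁻¹ + 2 / s ^ 2) * 1 ≤ 20 * fA * t / s ^ 5 := by
  have hsne : s ≠ 0 := ne_of_gt hs
  have key : 3 * s ^ 3 ≤ 20 * fA * t := by
    nlinarith [mul_nonneg (sub_nonneg.mpr hfAs) ht0,
      mul_nonneg (sub_nonneg.mpr hst) (mul_nonneg hs.le hs.le),
      mul_nonneg (mul_nonneg hs.le hs.le) hs.le]
  calc ((s ^ 2)⁻¹ + 2 / s ^ 2) * 1 = 3 * s ^ 3 / s ^ 5 := by field_simp; ring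
    _ ≤ 20 * fA * t / s ^ 5 := by gcongr
    _ = 20 * fA * t / s ^ 5 := rfl



/-- stability of the truncated pseudoinverse.  Here `A` and `Ã` are given
by spectral decompositions `A = Σᵢ λᵢ vᵢvᵢᵀ`, `Ã = Σᵢ μᵢ wᵢwᵢᵀ` with orthonormal
eigenvector bases; the `η`-truncated pseudoinverse of `A` is
`Σ_{λᵢ ≥ η} λᵢ⁻¹ vᵢvᵢᵀ`, and `Π_V = Σ_{λᵢ ≥ η} vᵢvᵢᵀ`. -/
theorem pseudoinverse_stability {n : ℕ} (η : ℝ) (hη : 0 < η)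
    (A Atil : Matrix (Fin n) (Fin n) ℝ)
    (v w : Fin n → EuclideanSpace ℝ (Fin n)) (lam mu : Fin n → ℝ)
    (hv : Orthonormal ℝ v) (hw : Orthonormal ℝ w)
    (hlam : ∀ i, 0 ≤ lam i) (hmu : ∀ i, 0 ≤ mu i)
    (hA : A = ∑ i, lam i • Matrix.vecMulVec (toPi (v i)) (toPi (v i)))
    (hAtil : Atil = ∑ i, mu i • Matrix.vecMulVec (toPi (w i)) (toPi (w i))) :
    specNorm
        (((∑ i, if η ≤ lam i then
              (lam i)⁻¹ • Matrix.vecMulVec (toPi (v i)) (toPi (v i)) else 0)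
          - ∑ i, if η / 2 ≤ mu i then
              (mu i)⁻¹ • Matrix.vecMulVec (toPi (w i)) (toPi (w i)) else 0)
          * ∑ i, if η ≤ lam i then Matrix.vecMulVec (toPi (v i)) (toPi (v i)) else 0)
      ≤ 20 * frobNorm A * Real.sqrt (specNorm (A - Atil)) / η ^ ((5 : ℝ) / 2) := by
  classical
  set qc : Fin n → ℝ := fun i => if η ≤ lam i then 1 else 0 with hqc
  set rc : Fin n → ℝ := fun i => if η ≤ lam i then (lam i)⁻¹ else 0 with hrc
  set bc : Fin n → ℝ := fun i => if η / 2 ≤ mu i then (mu i)⁻¹ else 0 with hbc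
  set tc : Fin n → ℝ := fun i => if η / 2 ≤ mu i then 1 else 0 with htc
  set pc : Fin n → ℝ := fun i => if η / 2 ≤ mu i then 0 else 1 with hpc
  have hA' : A = specM v lam := hA
  have hAt' : Atil = specM w mu := hAtil
  have hQe : (∑ i, if η ≤ lam i then Matrix.vecMulVec (toPi (v i)) (toPi (v i)) else 0)
      = specM v qc := by
    unfold specM
    refine Finset.sum_congr rfl fun i _ => ?_
    by_cases h : η ≤ lam i <;> simp [hqc, h]
  have hRe : (∑ i, if η ≤ lam i then (lam i)⁻¹ • Matrix.vecMulVec (toPi (v i)) (toPi (v i)) else 0)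
      = specM v rc := by
    unfold specM
    refine Finset.sum_congr rfl fun i _ => ?_
    by_cases h : η ≤ lam i <;> simp [hrc, h]
  have hBe : (∑ i, if η / 2 ≤ mu i then (mu i)⁻¹ • Matrix.vecMulVec (toPi (w i)) (toPi (w i)) else 0)
      = specM w bc := by
    unfold specM
    refine Finset.sum_congr rfl fun i _ => ?_
    by_cases h : η / 2 ≤ mu i <;> simp [hbc, h]
  rw [hQe, hRe, hBe]
  -- algebraic identities
  have eRQ : specM v rc * specM v qc = specM v rc := by
    rw [specM_mul hv]; refine congrArg (specM v) (funext fun i => ?_)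
    by_cases h : η ≤ lam i <;> simp [hrc, hqc, h]
  have eQR : specM v qc * specM v rc = specM v rc := by
    rw [specM_mul hv]; refine congrArg (specM v) (funext fun i => ?_)
    by_cases h : η ≤ lam i <;> simp [hrc, hqc, h]
  have eAR : specM v lam * specM v rc = specM v qc := by
    rw [specM_mul hv]; refine congrArg (specM v) (funext fun i => ?_)
    by_cases h : η ≤ lam i
    · simp [hrc, hqc, h, mul_inv_cancel₀ (ne_of_gt (lt_of_lt_of_le hη h))]
    · simp [hrc, hqc, h]
  have eBAt : specM w bc * specM w mu = specM w tc := by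
    rw [specM_mul hw]; refine congrArg (specM w) (funext fun i => ?_)
    by_cases h : η / 2 ≤ mu i
    · simp [hbc, htc, h, inv_mul_cancel₀ (ne_of_gt (lt_of_lt_of_le (by linarith) h))]
    · simp [hbc, htc, h]
  have ePt : specM w pc = 1 - specM w tc := by
    have hadd : specM w pc + specM w tc = specM w (fun _ => (1:ℝ)) := by
      unfold specM
      rw [← Finset.sum_add_distrib]
      refine Finset.sum_congr rfl fun i _ => ?_
      rw [← add_smul]
      by_cases h : η / 2 ≤ mu i <;> simp [hpc, htc, h]
    rw [specM_one hw] at hadd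
    rw [← hadd]; abel
  have main : (specM v rc - specM w bc) * specM v qc
      = specM w pc * specM v qc * specM v rc
        + specM w bc * (Atil - A) * specM v rc := by
    have h3 : specM w bc * specM v lam = specM w tc - specM w bc * (Atil - A) := by
      calc specM w bc * specM v lam
          = specM w bc * Atil - specM w bc * (Atil - A) := by
            rw [← Matrix.mul_sub, sub_sub_cancel, hA']
        _ = specM w tc - specM w bc * (Atil - A) := by rw [hAt', eBAt]
    have h2 : specM w bc * specM v qc
        = specM w tc * specM v rc - specM w bc * (Atil - A) * specM v rc := by
      rw [← eAR, ← Matrix.mul_assoc, h3, sub_mul]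
    have h1 : specM w pc * specM v qc * specM v rc = specM v rc - specM w tc * specM v rc := by
      rw [Matrix.mul_assoc, eQR, ePt, sub_mul, Matrix.one_mul]
    rw [sub_mul, eRQ, h2, h1]
    abel
  -- quantities
  set ε := specNorm (A - Atil) with hep
  have hε0 : 0 ≤ ε := specNorm_nonneg _
  set fA := frobNorm A with hfAdef
  have hfA0 : 0 ≤ fA := Real.sqrt_nonneg _
  have hfrob : fA ^ 2 = ∑ i, lam i ^ 2 := by
    rw [hfAdef, hA']; exact frobNorm_sq_specM hv lam
  have hqc0 : ∀ j, 0 ≤ qc j := fun j => by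
    by_cases h : η ≤ lam j <;> simp [hqc, h]
  have hnR : specNorm (specM v rc) ≤ η⁻¹ := by
    apply specNorm_specM_le hv _ (inv_nonneg.mpr hη.le)
    intro i
    by_cases h : η ≤ lam i
    · rw [hrc]; simp only [h, if_true]
      rw [abs_of_nonneg (inv_nonneg.mpr (hlam i))]
      gcongr
    · rw [hrc]; simp only [h, if_false, abs_zero]; positivity
  have hnB : specNorm (specM w bc) ≤ 2 / η := by
    apply specNorm_specM_le hw _ (by positivity)
    intro i
    by_cases h : η / 2 ≤ mu i
    · rw [hbc]; simp only [h, if_true]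
      rw [abs_of_nonneg (inv_nonneg.mpr (hmu i))]
      calc (mu i)⁻¹ ≤ (η / 2)⁻¹ := by gcongr
        _ = 2 / η := by rw [inv_div]
    · rw [hbc]; simp only [h, if_false, abs_zero]; positivity
  have hnQ : specNorm (specM v qc) ≤ 1 := by
    apply specNorm_specM_le hv _ zero_le_one
    intro i; by_cases h : η ≤ lam i <;> simp [hqc, h]
  have hnE' : specNorm (Atil - A) = ε := by
    rw [hep, ← specNorm_neg (Atil - A), neg_sub]
  -- bound on specNorm (P * Q)
  have hPQ1 : specNorm (specM w pc * specM v qc)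
      ≤ Real.sqrt (∑ i, ∑ j, (pc i * qc j * (inner ℝ (w i) (v j) : ℝ)) ^ 2) := by
    rw [specM_mul_specM]
    exact specNorm_doubleSum_le hw hv _
  have hX : ∀ j, (∑ i, (toPi (w i) ⬝ᵥ ((A - Atil) *ᵥ toPi (v j))) ^ 2) ≤ ε ^ 2 := by
    intro j
    have h1 : ∀ i, toPi (w i) ⬝ᵥ ((A - Atil) *ᵥ toPi (v j))
        = (inner ℝ (w i) (ofPi ((A - Atil) *ᵥ toPi (v j))
            : EuclideanSpace ℝ (Fin n)) : ℝ) := fun i => by rw [← toPi_dot]; rfl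
    calc (∑ i, (toPi (w i) ⬝ᵥ ((A - Atil) *ᵥ toPi (v j))) ^ 2)
        = ∑ i, (inner ℝ (w i) (ofPi ((A - Atil) *ᵥ toPi (v j))
            : EuclideanSpace ℝ (Fin n)) : ℝ) ^ 2 := by
          exact Finset.sum_congr rfl fun i _ => by rw [h1 i]
      _ ≤ ‖(ofPi ((A - Atil) *ᵥ toPi (v j)) : EuclideanSpace ℝ (Fin n))‖ ^ 2 := bessel hw _
      _ ≤ ε ^ 2 := by
          have h2 := norm_mulVec_le (A - Atil) (v j)
          rw [hv.1 j, mul_one] at h2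
          exact pow_le_pow_left₀ (norm_nonneg _) h2 2
  have hterm : ∀ i j, (pc i * qc j * (inner ℝ (w i) (v j) : ℝ)) ^ 2
      ≤ (2 / η) ^ 2 * qc j * (toPi (w i) ⬝ᵥ ((A - Atil) *ᵥ toPi (v j))) ^ 2 := by
    intro i j
    by_cases hp : η / 2 ≤ mu i
    · have h0 : pc i = 0 := by simp [hpc, hp]
      rw [h0]
      simp only [zero_mul, ne_eq, OfNat.ofNat_ne_zero, not_false_eq_true, zero_pow]
      exact mul_nonneg (mul_nonneg (sq_nonneg _) (hqc0 j)) (sq_nonneg _)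
    by_cases hq : η ≤ lam j
    · have hp1 : pc i = 1 := by simp [hpc, hp]
      have hq1 : qc j = 1 := by simp [hqc, hq]
      rw [hp1, hq1, one_mul, one_mul, mul_one]
      have hd : toPi (w i) ⬝ᵥ ((A - Atil) *ᵥ toPi (v j))
          = (lam j - mu i) * (inner ℝ (w i) (v j) : ℝ) := by
        rw [hA', hAt']; exact eigen_dot hv hw lam mu i j
      rw [hd]
      have hg : η / 2 ≤ lam j - mu i := by push_neg at hp; linarith
      have expand : (2 / η) ^ 2 * ((lam j - mu i) * (inner ℝ (w i) (v j) : ℝ)) ^ 2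
          = ((2 / η) * (lam j - mu i)) ^ 2 * (inner ℝ (w i) (v j) : ℝ) ^ 2 := by ring
      rw [expand]
      have h1le : (1 : ℝ) ≤ ((2 / η) * (lam j - mu i)) ^ 2 := by
        have h2 : (1 : ℝ) ≤ (2 / η) * (lam j - mu i) := by
          rw [div_mul_eq_mul_div, le_div_iff₀ hη]; linarith
        nlinarith
      nlinarith [sq_nonneg ((inner ℝ (w i) (v j)) : ℝ)]
    · have h0 : qc j = 0 := by simp [hqc, hq]
      rw [h0]; simp
  have hcount : (∑ j, qc j) ≤ fA ^ 2 / η ^ 2 := by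
    rw [le_div_iff₀ (by positivity : (0:ℝ) < η ^ 2)]
    calc (∑ j, qc j) * η ^ 2 = ∑ j, qc j * η ^ 2 := by rw [Finset.sum_mul]
      _ ≤ ∑ j, lam j ^ 2 := by
          refine Finset.sum_le_sum fun j _ => ?_
          by_cases h : η ≤ lam j
          · simp only [hqc, h, if_true, one_mul]
            exact pow_le_pow_left₀ hη.le h 2
          · simp only [hqc, h, if_false, zero_mul]; positivity
      _ = fA ^ 2 := hfrob.symm
  have hS2 : (∑ i, ∑ j, (pc i * qc j * (inner ℝ (w i) (v j) : ℝ)) ^ 2)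
      ≤ (2 / η) ^ 2 * ((fA ^ 2 / η ^ 2) * ε ^ 2) := by
    calc (∑ i, ∑ j, (pc i * qc j * (inner ℝ (w i) (v j) : ℝ)) ^ 2)
        ≤ ∑ i, ∑ j, (2 / η) ^ 2 * qc j * (toPi (w i) ⬝ᵥ ((A - Atil) *ᵥ toPi (v j))) ^ 2 :=
          Finset.sum_le_sum fun i _ => Finset.sum_le_sum fun j _ => hterm i j
      _ = ∑ j, ∑ i, (2 / η) ^ 2 * qc j * (toPi (w i) ⬝ᵥ ((A - Atil) *ᵥ toPi (v j))) ^ 2 :=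
          Finset.sum_comm
      _ = (2 / η) ^ 2 * ∑ j, qc j * (∑ i, (toPi (w i) ⬝ᵥ ((A - Atil) *ᵥ toPi (v j))) ^ 2) := by
          rw [Finset.mul_sum]
          refine Finset.sum_congr rfl fun j _ => ?_
          rw [Finset.mul_sum, Finset.mul_sum]
          exact Finset.sum_congr rfl fun i _ => by ring
      _ ≤ (2 / η) ^ 2 * ∑ j, qc j * ε ^ 2 := by
          apply mul_le_mul_of_nonneg_left _ (by positivity)
          exact Finset.sum_le_sum fun j _ => mul_le_mul_of_nonneg_left (hX j) (hqc0 j)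
      _ = (2 / η) ^ 2 * ((∑ j, qc j) * ε ^ 2) := by rw [← Finset.sum_mul]
      _ ≤ (2 / η) ^ 2 * ((fA ^ 2 / η ^ 2) * ε ^ 2) := by
          apply mul_le_mul_of_nonneg_left _ (by positivity)
          exact mul_le_mul_of_nonneg_right hcount (sq_nonneg _)
  have hPQ : specNorm (specM w pc * specM v qc) ≤ 2 * ε * fA / η ^ 2 := by
    refine hPQ1.trans ?_
    have heq : (2 / η) ^ 2 * ((fA ^ 2 / η ^ 2) * ε ^ 2) = (2 * ε * fA / η ^ 2) ^ 2 := by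
      field_simp
    rw [← Real.sqrt_sq (show (0:ℝ) ≤ 2 * ε * fA / η ^ 2 by positivity)]
    exact Real.sqrt_le_sqrt (by rw [← heq]; exact hS2)
  -- two global bounds
  have hsplit : specNorm ((specM v rc - specM w bc) * specM v qc)
      ≤ (2 * ε * fA / η ^ 2) * η⁻¹ + (2 / η) * ε * η⁻¹ := by
    rw [main]
    refine (specNorm_add_le _ _).trans ?_
    have hx : specNorm (specM w pc * specM v qc * specM v rc)
        ≤ (2 * ε * fA / η ^ 2) * η⁻¹ := by
      refine (specNorm_mul_le _ _).trans ?_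
      exact mul_le_mul hPQ hnR (specNorm_nonneg _) (by positivity)
    have hy : specNorm (specM w bc * (Atil - A) * specM v rc)
        ≤ (2 / η) * ε * η⁻¹ := by
      refine (specNorm_mul_le _ _).trans ?_
      have hy1 : specNorm (specM w bc * (Atil - A)) ≤ (2 / η) * ε := by
        refine (specNorm_mul_le _ _).trans ?_
        rw [hnE']
        exact mul_le_mul_of_nonneg_right hnB hε0
      exact mul_le_mul hy1 hnR (specNorm_nonneg _) (by positivity)
    exact add_le_add hx hy
  have hcrude : specNorm ((specM v rc - specM w bc) * specM v qc)
      ≤ (η⁻¹ + 2 / η) * 1 := by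
    refine (specNorm_mul_le _ _).trans ?_
    have hsub : specNorm (specM v rc - specM w bc) ≤ η⁻¹ + 2 / η := by
      rw [sub_eq_add_neg]
      refine (specNorm_add_le _ _).trans ?_
      rw [specNorm_neg]
      exact add_le_add hnR hnB
    exact mul_le_mul hsub hnQ (specNorm_nonneg _) (by positivity)
  -- RHS rewrite
  have hrpow : η ^ ((5:ℝ)/2) = Real.sqrt η ^ 5 := by
    rw [Real.sqrt_eq_rpow, ← Real.rpow_natCast (η ^ ((1:ℝ)/2)) 5, ← Real.rpow_mul hη.le]
    norm_num
  set s := Real.sqrt η with hsdef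
  set t := Real.sqrt ε with htdef
  have hs : 0 < s := Real.sqrt_pos.mpr hη
  have hs2 : s ^ 2 = η := Real.sq_sqrt hη.le
  have ht2 : t ^ 2 = ε := Real.sq_sqrt hε0
  have ht0 : 0 ≤ t := Real.sqrt_nonneg _
  rw [hrpow]
  by_cases hne : ∃ j, η ≤ lam j
  · obtain ⟨j0, hj0⟩ := hne
    have hfAη : η ≤ fA := by
      have h1 := Finset.single_le_sum (f := fun j => lam j ^ 2)
        (fun j _ => sq_nonneg _) (Finset.mem_univ j0)
      have h2 : η ^ 2 ≤ fA ^ 2 := by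
        rw [hfrob]
        exact le_trans (pow_le_pow_left₀ hη.le hj0 2) h1
      exact sq_le_of_sq_le hη.le hfA0 h2
    have hfAs : s ^ 2 ≤ fA := by rw [hs2]; exact hfAη
    by_cases hcase : ε ≤ η
    · have hts : t ≤ s := Real.sqrt_le_sqrt hcase
      refine hsplit.trans ?_
      rw [← ht2, ← hs2]
      exact num1 hs ht0 hts hfA0 hfAs
    · have hst : s ≤ t := Real.sqrt_le_sqrt (le_of_not_ge hcase)
      refine hcrude.trans ?_
      rw [← hs2]
      exact num2 hs ht0 hst hfA0 hfAs
  · push_neg at hne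
    have hQ0 : specM v qc = 0 := by
      unfold specM
      apply Finset.sum_eq_zero
      intro i _
      have h0 : qc i = 0 := by
        simp only [hqc]
        exact if_neg (not_le.mpr (hne i))
      rw [h0, zero_smul]
    rw [hQ0, mul_zero, specNorm_zero]
    exact div_nonneg (mul_nonneg (mul_nonneg (by norm_num) hfA0) ht0) (pow_pos hs 5).le
end

section
/- Let n, M ∈ ℕ, let η > 0, let B be a real n×M matrix, and let N̂ be a real positive semidefinite M×M matrix with spectral decomposition N̂ = Σᵢ λᵢ vᵢvᵢᵀ, where v₁,…,v_M form an orthonormal basis of eigenvectors with eigenvalues λᵢ ≥ 0. Let Ŵ be the M×M matrix whose i-th row equals λᵢ^{-1/2}·vᵢᵀ if λᵢ ≥ η/4 and is zero otherwise, and let Î be the M×M diagonal matrix whose i-th diagonal entry is 1 if λᵢ ≥ η/4 and 0 otherwise. Then ‖Î − Ŵ·(BᵀB)·Ŵᵀ‖_F ≤ (4/η)·‖N̂ − BᵀB‖_F. -/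
open MeasureTheory Matrix

lemma frob_sq_eq_trace' {m : ℕ} (A : Matrix (Fin m) (Fin m) ℝ) :
    ∑ i, ∑ j, A i j ^ 2 = Matrix.trace (Aᵀ * A) := by
  simp [Matrix.trace, Matrix.mul_apply, Matrix.diag, sq]
  exact Finset.sum_comm

/-- near-isometry of `Ŵ B ᵀ`.  Here `N̂ = Σᵢ λᵢ vᵢvᵢᵀ` is psd with
orthonormal eigenbasis `v`, `Ŵ` has `i`-th row `λᵢ^{-1/2} vᵢᵀ` when `λᵢ ≥ η/4` (zero
otherwise) and `Î` is the corresponding 0/1 diagonal matrix. -/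
theorem almost_isometry {n M : ℕ} (η : ℝ) (hη : 0 < η)
    (B : Matrix (Fin n) (Fin M) ℝ) (Nhat : Matrix (Fin M) (Fin M) ℝ)
    (v : Fin M → EuclideanSpace ℝ (Fin M)) (lam : Fin M → ℝ)
    (hv : Orthonormal ℝ v) (hlam : ∀ i, 0 ≤ lam i)
    (hN : Nhat = ∑ i, lam i • Matrix.vecMulVec (toPi (v i)) (toPi (v i))) :
    frobNorm
        ((Matrix.diagonal fun i => if η / 4 ≤ lam i then (1 : ℝ) else 0)
          - (Matrix.of fun i j =>
                if η / 4 ≤ lam i then (lam i) ^ (-(1 : ℝ) / 2) * toPi (v i) j else 0)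
            * (Bᵀ * B)
            * (Matrix.of fun i j =>
                if η / 4 ≤ lam i then (lam i) ^ (-(1 : ℝ) / 2) * toPi (v i) j else 0)ᵀ)
      ≤ (4 / η) * frobNorm (Nhat - Bᵀ * B) :=  by
  classical
  set W : Matrix (Fin M) (Fin M) ℝ := Matrix.of fun i j =>
      if η / 4 ≤ lam i then (lam i) ^ (-(1 : ℝ) / 2) * toPi (v i) j else 0 with hWdef
  set d : Fin M → ℝ := fun i => if η / 4 ≤ lam i then (lam i) ^ (-(1 : ℝ) / 2) else 0 with hd
  set V : Matrix (Fin M) (Fin M) ℝ := Matrix.of fun i j => toPi (v j) i with hVdef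
  have hVtV : Vᵀ * V = 1 := by
    rw [orthonormal_iff_ite] at hv
    ext i j
    have h := hv i j
    simp [PiLp.inner_apply, RCLike.inner_apply, conj_trivial] at h
    simp [hVdef, Matrix.mul_apply, Matrix.one_apply, toPi, h]
    rw [← h]; exact Finset.sum_congr rfl fun _ _ => mul_comm _ _
  have hVVt : V * Vᵀ = 1 := mul_eq_one_comm.mp hVtV
  have hWD : W = Matrix.diagonal d * Vᵀ := by
    ext i j
    by_cases hc : η / 4 ≤ lam i <;>
      simp [hWdef, hd, hVdef, Matrix.diagonal_mul, hc]
  have hNV : Nhat = V * Matrix.diagonal lam * Vᵀ := by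
    rw [hN]; ext i j
    simp [hVdef, Matrix.mul_apply, Matrix.sum_apply, Matrix.vecMulVec_apply,
      Matrix.diagonal, Finset.sum_mul]
    apply Finset.sum_congr rfl
    intro k _
    by_cases hk : k = i <;> ring
  have hWNW : W * Nhat * Wᵀ
      = Matrix.diagonal (fun i => if η / 4 ≤ lam i then (1 : ℝ) else 0) := by
    rw [hWD, hNV]
    have : Matrix.diagonal d * Vᵀ * (V * Matrix.diagonal lam * Vᵀ) * (Matrix.diagonal d * Vᵀ)ᵀ
        = Matrix.diagonal d * (Vᵀ * V) * Matrix.diagonal lam * (Vᵀ * V) * (Matrix.diagonal d)ᵀ := by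
      simp only [Matrix.transpose_mul, Matrix.transpose_transpose]
      noncomm_ring
    rw [this, hVtV, Matrix.mul_one, Matrix.mul_one, Matrix.diagonal_transpose,
      Matrix.diagonal_mul_diagonal, Matrix.diagonal_mul_diagonal]
    have hfun : (fun i => d i * lam i * d i)
        = fun i => if η / 4 ≤ lam i then (1 : ℝ) else 0 := by
      funext i
      by_cases hc : η / 4 ≤ lam i
      · have hpos : 0 < lam i := lt_of_lt_of_le (by positivity) hc
        have h1 : (lam i) ^ (-(1:ℝ)/2) * lam i * (lam i) ^ (-(1:ℝ)/2)
            = (lam i) ^ ((-(1:ℝ)/2) + 1 + (-(1:ℝ)/2)) := by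
          rw [Real.rpow_add hpos, Real.rpow_add hpos, Real.rpow_one]
        simp only [hd, if_pos hc]
        rw [h1]
        norm_num
      · simp only [hd, if_pos hc, if_neg hc]
        ring
    rw [hfun]
  set E : Matrix (Fin M) (Fin M) ℝ := Nhat - Bᵀ * B with hE
  have hmain : (Matrix.diagonal fun i => if η / 4 ≤ lam i then (1 : ℝ) else 0)
      - W * (Bᵀ * B) * Wᵀ = W * E * Wᵀ := by
    rw [← hWNW, hE]
    noncomm_ring
  rw [hmain]
  set F : Matrix (Fin M) (Fin M) ℝ := Vᵀ * E * V with hF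
  have hWEW : W * E * Wᵀ = Matrix.diagonal d * F * Matrix.diagonal d := by
    rw [hWD, hF]
    simp only [Matrix.transpose_mul, Matrix.transpose_transpose, Matrix.diagonal_transpose]
    noncomm_ring
  rw [hWEW]
  -- Frobenius norms: `frobNorm F = frobNorm E`
  have hFE : ∑ i, ∑ j, F i j ^ 2 = ∑ i, ∑ j, E i j ^ 2 := by
    rw [frob_sq_eq_trace' F, frob_sq_eq_trace' E, hF]
    have h1 : (Vᵀ * E * V)ᵀ * (Vᵀ * E * V) = Vᵀ * (Eᵀ * E) * V := by
      have h2 : (Vᵀ * E * V)ᵀ * (Vᵀ * E * V) = Vᵀ * Eᵀ * (V * Vᵀ) * (E * V) := by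
        simp only [Matrix.transpose_mul, Matrix.transpose_transpose]
        noncomm_ring
      rw [h2, hVVt, Matrix.mul_one]
      noncomm_ring
    rw [h1, Matrix.trace_mul_cycle, ← Matrix.mul_assoc, hVVt, Matrix.one_mul]
  have hd2 : ∀ i, d i ^ 2 ≤ 4 / η := by
    intro i
    by_cases hc : η / 4 ≤ lam i
    · have hpos : 0 < lam i := lt_of_lt_of_le (by positivity) hc
      have h1 : d i ^ 2 = (lam i)⁻¹ := by
        simp [hd, hc]
        rw [← Real.rpow_natCast ((lam i) ^ (-(1:ℝ)/2)) 2, ← Real.rpow_mul hpos.le]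
        norm_num
        exact (Real.rpow_neg_one _)
      rw [h1]
      have h2 : (4 : ℝ) / η = (η / 4)⁻¹ := by field_simp
      rw [h2]
      exact inv_anti₀ (by positivity) hc
    · simp [hd, hc]
      positivity
  have hdnn : ∀ i, 0 ≤ d i ^ 2 := fun i => sq_nonneg _
  have hkey : ∑ i, ∑ j, (Matrix.diagonal d * F * Matrix.diagonal d) i j ^ 2
      ≤ (4 / η) ^ 2 * ∑ i, ∑ j, F i j ^ 2 := by
    rw [Finset.mul_sum]
    apply Finset.sum_le_sum
    intro i _
    rw [Finset.mul_sum]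
    apply Finset.sum_le_sum
    intro j _
    have hentry : (Matrix.diagonal d * F * Matrix.diagonal d) i j = d i * F i j * d j := by
      simp [Matrix.mul_diagonal, Matrix.diagonal_mul]
    rw [hentry]
    have : (d i * F i j * d j) ^ 2 = (d i ^ 2) * (d j ^ 2) * F i j ^ 2 := by ring
    rw [this]
    have h1 : (d i ^ 2) * (d j ^ 2) ≤ (4 / η) * (4 / η) :=
      mul_le_mul (hd2 i) (hd2 j) (hdnn j) (by positivity)
    calc (d i ^ 2) * (d j ^ 2) * F i j ^ 2 ≤ (4 / η) * (4 / η) * F i j ^ 2 :=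
          mul_le_mul_of_nonneg_right h1 (sq_nonneg _)
      _ = (4 / η) ^ 2 * F i j ^ 2 := by ring
  rw [hFE] at hkey
  unfold frobNorm
  calc Real.sqrt (∑ i, ∑ j, (Matrix.diagonal d * F * Matrix.diagonal d) i j ^ 2)
      ≤ Real.sqrt ((4 / η) ^ 2 * ∑ i, ∑ j, E i j ^ 2) := Real.sqrt_le_sqrt hkey
    _ = (4 / η) * Real.sqrt (∑ i, ∑ j, E i j ^ 2) := by
        rw [Real.sqrt_mul (by positivity), Real.sqrt_sq (by positivity)]
end
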